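/- arXiv:2104.00502 — 12 statements merged into one kernel-verified Lean document; each statement's English description precedes it below -/
import Mathlib

section
/- Let a be a Barker sequence of even length n ≥ 4. Then |Σ_{j=1}^{n} a_j| = √n, and consequently n = 4r² for some positive integer r; in particular n is a multiple of 4. -/
/-- The `k`th aperiodic autocorrelation of the sequence `a` of length `n`:
`C_k(a) = ∑_{j=1}^{n-k} a_j a_{j+k}`. -/
def aperiodicCorr (a : ℕ → ℤ) (n k : ℕ) : ℤ :=
  ∑ j ∈ Finset.Icc 1 (n - k), a j * a (j + k)

open Finset


lemma sum_pm_two {ι : Type*} (s : Finset ι) (f : ι → ℤ)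
    (h : ∀ i ∈ s, f i = 1 ∨ f i = -1) :
    (2:ℤ) ∣ (∑ i ∈ s, f i) - s.card := by
  have : (∑ i ∈ s, f i) - s.card = ∑ i ∈ s, (f i - 1) := by
    rw [Finset.sum_sub_distrib, Finset.sum_const, nsmul_eq_mul, mul_one]
  rw [this]
  refine Finset.dvd_sum fun i hi => ?_
  rcases h i hi with h1 | h1 <;> simp [h1]

lemma sum_pm_four {ι : Type*} [DecidableEq ι] (s : Finset ι) (f : ι → ℤ)
    (h : ∀ i ∈ s, f i = 1 ∨ f i = -1) (hp : ∏ i ∈ s, f i = 1) :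
    (4:ℤ) ∣ (∑ i ∈ s, f i) - s.card := by
  classical
  set t := s.filter (fun i => f i = -1) with ht
  have hsum : (∑ i ∈ s, f i) - s.card = (-2) * t.card := by
    have h1 : (∑ i ∈ s, f i) - s.card = ∑ i ∈ s, (f i - 1) := by
      rw [Finset.sum_sub_distrib, Finset.sum_const, nsmul_eq_mul, mul_one]
    rw [h1, ← Finset.sum_filter_add_sum_filter_not s (fun i => f i = -1)]
    have h2 : ∑ i ∈ s.filter (fun i => ¬ f i = -1), (f i - 1) = 0 := by
      refine Finset.sum_eq_zero fun i hi => ?_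
      rcases Finset.mem_filter.mp hi with ⟨hi1, hi2⟩
      rcases h i hi1 with h1 | h1 <;> simp [h1] at hi2 ⊢
    have h3 : ∑ i ∈ t, (f i - 1) = (-2) * t.card := by
      have hc : ∀ i ∈ t, f i - 1 = -2 := fun i hi => by
        rw [(Finset.mem_filter.mp hi).2]; ring
      rw [Finset.sum_congr rfl hc, Finset.sum_const, nsmul_eq_mul]; ring
    rw [h2, ← ht, h3, add_zero]
  have hprod : (∏ i ∈ s, f i) = (-1) ^ t.card := by
    rw [← Finset.prod_filter_mul_prod_filter_not s (fun i => f i = -1)]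
    have h2 : ∏ i ∈ s.filter (fun i => ¬ f i = -1), f i = 1 := by
      refine Finset.prod_eq_one fun i hi => ?_
      rcases Finset.mem_filter.mp hi with ⟨hi1, hi2⟩
      rcases h i hi1 with h1 | h1 <;> simp [h1] at hi2 ⊢
    rw [h2, mul_one, ← ht, Finset.prod_congr rfl (fun i hi => (Finset.mem_filter.mp hi).2),
      Finset.prod_const]
  rw [hprod] at hp
  have heven : Even t.card := by
    by_contra hodd
    rw [(Nat.not_even_iff_odd.mp hodd).neg_one_pow] at hp
    norm_num at hp
  obtain ⟨m, hm⟩ := heven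
  rw [hsum, hm]
  push_cast
  ring_nf
  omega

lemma prod_shift (a : ℕ → ℤ) (m t : ℕ) :
    ∏ j ∈ Icc 1 m, a (j + t) = ∏ j ∈ Icc (1+t) (m+t), a j := by
  rw [← Finset.map_add_right_Icc 1 m t, Finset.prod_map]
  rfl

lemma prod_split (a : ℕ → ℤ) {m n : ℕ} (hm : m ≤ n) :
    (∏ j ∈ Icc 1 m, a j) * ∏ j ∈ Icc (m+1) n, a j = ∏ j ∈ Icc 1 n, a j := by
  rw [show (Icc 1 m : Finset ℕ) = Ioc 0 m from Finset.Icc_add_one_left_eq_Ioc 0 m,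
    show (Icc 1 n : Finset ℕ) = Ioc 0 n from Finset.Icc_add_one_left_eq_Ioc 0 n,
    show (Icc (m+1) n : Finset ℕ) = Ioc m n from Finset.Icc_add_one_left_eq_Ioc m n]
  exact Finset.prod_Ioc_consecutive a (Nat.zero_le m) hm

lemma corr_pair (n k : ℕ) (a : ℕ → ℤ) (hk1 : 1 ≤ k) (hk2 : k ≤ n - 1) (hn : 2 ≤ n)
    (ha : ∀ j, 1 ≤ j → j ≤ n → a j = 1 ∨ a j = -1) :
    (4:ℤ) ∣ (aperiodicCorr a n k + aperiodicCorr a n (n-k)) - n := by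
  classical
  have hkn : k ≤ n := by omega
  set f : ℕ ⊕ ℕ → ℤ := Sum.elim (fun j => a j * a (j+k)) (fun j => a j * a (j+(n-k))) with hf
  set s : Finset (ℕ ⊕ ℕ) := (Icc 1 (n-k)).disjSum (Icc 1 k) with hs
  have hmem : ∀ i ∈ s, f i = 1 ∨ f i = -1 := by
    rintro (j | j) hj <;> simp only [hf, Sum.elim_inl, Sum.elim_inr]
    · rw [hs, Finset.inl_mem_disjSum, Finset.mem_Icc] at hj
      obtain ⟨h1, h2⟩ := hj
      rcases ha j h1 (by omega) with h3 | h3 <;>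
        rcases ha (j+k) (by omega) (by omega) with h4 | h4 <;> simp [h3, h4]
    · rw [hs, Finset.inr_mem_disjSum, Finset.mem_Icc] at hj
      obtain ⟨h1, h2⟩ := hj
      rcases ha j h1 (by omega) with h3 | h3 <;>
        rcases ha (j+(n-k)) (by omega) (by omega) with h4 | h4 <;> simp [h3, h4]
  have hprod : ∏ i ∈ s, f i = 1 := by
    rw [hs, hf, Finset.prod_disjSum]
    simp only [Sum.elim_inl, Sum.elim_inr]
    rw [Finset.prod_mul_distrib, Finset.prod_mul_distrib, prod_shift, prod_shift]
    have e1 : n - k + k = n := by omega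
    have e2 : k + (n - k) = n := by omega
    rw [e1, e2]
    have e3 : (1 : ℕ) + k = k + 1 := by omega
    have e4 : (1 : ℕ) + (n - k) = (n - k) + 1 := by omega
    rw [e3, e4]
    have p1 := prod_split a (show k ≤ n by omega)
    have p2 := prod_split a (show n - k ≤ n by omega)
    calc (∏ j ∈ Icc 1 (n-k), a j) * (∏ j ∈ Icc (k+1) n, a j) *
          ((∏ j ∈ Icc 1 k, a j) * ∏ j ∈ Icc ((n-k)+1) n, a j)
        = ((∏ j ∈ Icc 1 k, a j) * ∏ j ∈ Icc (k+1) n, a j) *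
          ((∏ j ∈ Icc 1 (n-k), a j) * ∏ j ∈ Icc ((n-k)+1) n, a j) := by ring
      _ = (∏ j ∈ Icc 1 n, a j) * (∏ j ∈ Icc 1 n, a j) := by rw [p1, p2]
      _ = ∏ j ∈ Icc 1 n, (a j * a j) := by rw [← Finset.prod_mul_distrib]
      _ = 1 := by
          refine Finset.prod_eq_one fun j hj => ?_
          rw [Finset.mem_Icc] at hj
          rcases ha j hj.1 hj.2 with h | h <;> simp [h]
  have := sum_pm_four s f hmem hprod
  rw [hs, hf, Finset.sum_disjSum, Finset.card_disjSum] at this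
  simp only [Sum.elim_inl, Sum.elim_inr, Nat.card_Icc] at this
  have hcc : aperiodicCorr a n (n - k) = ∑ j ∈ Icc 1 k, a j * a (j + (n-k)) := by
    unfold aperiodicCorr
    congr 1
    congr 1
    omega
  rw [aperiodicCorr, hcc]
  have : (4:ℤ) ∣ (∑ j ∈ Icc 1 (n-k), a j * a (j+k)) + (∑ j ∈ Icc 1 k, a j * a (j+(n-k)))
      - ((n - k + 1 - 1 + (k + 1 - 1) : ℕ) : ℤ) := this
  have e5 : ((n - k + 1 - 1 + (k + 1 - 1) : ℕ) : ℤ) = (n : ℤ) := by push_cast; omega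
  rwa [e5] at this

theorem stmt_4 (n : ℕ) (hn : 4 ≤ n) (hne : Even n) (a : ℕ → ℤ)
    (ha : ∀ j, 1 ≤ j → j ≤ n → a j = 1 ∨ a j = -1)
    (hbarker : ∀ k, 1 ≤ k → k ≤ n - 1 → aperiodicCorr a n k ∈ ({-1, 0, 1} : Set ℤ)) :
    ((|∑ j ∈ Finset.Icc 1 n, a j| : ℤ) : ℝ) = Real.sqrt n ∧
    (∃ r : ℕ, 0 < r ∧ n = 4 * r ^ 2) ∧ 4 ∣ n := by
  classical
  obtain ⟨m0, hm0⟩ := hne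
  set S := ∑ j ∈ Finset.Icc 1 n, a j with hS
  have hpar : ∀ k, k ≤ n → (2:ℤ) ∣ aperiodicCorr a n k - ((n - k : ℕ) : ℤ) := by
    intro k hk
    have h := sum_pm_two (Icc 1 (n-k)) (fun j => a j * a (j+k)) ?_
    · simpa [aperiodicCorr, Nat.card_Icc] using h
    · intro j hj
      rw [Finset.mem_Icc] at hj
      rcases ha j hj.1 (by omega) with h3|h3 <;>
        rcases ha (j+k) (by omega) (by omega) with h4|h4 <;> simp [h3,h4]
  have hCval : ∀ k, 1 ≤ k → k ≤ n - 1 →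
      aperiodicCorr a n k = -1 ∨ aperiodicCorr a n k = 0 ∨ aperiodicCorr a n k = 1 := by
    intro k h1 h2
    have := hbarker k h1 h2
    simpa using this
  have h4n : 4 ∣ n := by
    have hC2 : aperiodicCorr a n 2 = 0 := by
      have hp := hpar 2 (by omega)
      have hv := hCval 2 (by omega) (by omega)
      omega
    have hCn2 : aperiodicCorr a n (n-2) = 0 := by
      have hp := hpar (n-2) (by omega)
      have hv := hCval (n-2) (by omega) (by omega)
      omega
    have hp := corr_pair n 2 a (by omega) (by omega) (by omega) ha
    rw [hC2, hCn2] at hp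
    omega
  have hzero : ∀ k ∈ Icc 1 (n-1), aperiodicCorr a n k + aperiodicCorr a n (n-k) = 0 := by
    intro k hk
    rw [Finset.mem_Icc] at hk
    have hp := corr_pair n k a hk.1 hk.2 (by omega) ha
    have h1 := hCval k hk.1 hk.2
    have h2 := hCval (n-k) (by omega) (by omega)
    omega
  set T := ∑ k ∈ Icc 1 (n-1), aperiodicCorr a n k with hTdef
  have hrefl : ∑ k ∈ Icc 1 (n-1), aperiodicCorr a n (n-k) = T := by
    rw [hTdef]
    refine Finset.sum_nbij' (fun k => n - k) (fun k => n - k) ?_ ?_ ?_ ?_ ?_ <;>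
      intro x hx <;> rw [Finset.mem_Icc] at hx
    · rw [Finset.mem_Icc]; omega
    · rw [Finset.mem_Icc]; omega
    · omega
    · omega
  have hT : T = 0 := by
    have h0 : ∑ k ∈ Icc 1 (n-1), (aperiodicCorr a n k + aperiodicCorr a n (n-k)) = 0 :=
      Finset.sum_eq_zero hzero
    rw [Finset.sum_add_distrib, hrefl] at h0
    omega
  -- square computation
  set P := (Icc 1 n) ×ˢ (Icc 1 n) with hP
  have hSS : S * S = ∑ p ∈ P, a p.1 * a p.2 := by
    rw [hS, Finset.sum_mul_sum, hP, Finset.sum_product]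
  have hsplit1 := Finset.sum_filter_add_sum_filter_not P (fun p => p.1 < p.2)
    (fun p => a p.1 * a p.2)
  have hsplit2 := Finset.sum_filter_add_sum_filter_not (P.filter (fun p => ¬ p.1 < p.2))
    (fun p => p.2 < p.1) (fun p => a p.1 * a p.2)
  have e1 : (P.filter (fun p => ¬ p.1 < p.2)).filter (fun p => p.2 < p.1)
      = P.filter (fun p => p.2 < p.1) := by
    rw [Finset.filter_filter]
    exact Finset.filter_congr (fun p _ => by constructor <;> intro h <;> [exact h.2; exact ⟨by omega, h⟩])
  have e2 : (P.filter (fun p => ¬ p.1 < p.2)).filter (fun p => ¬ p.2 < p.1)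
      = P.filter (fun p => p.1 = p.2) := by
    rw [Finset.filter_filter]
    exact Finset.filter_congr (fun p _ => by constructor <;> intro h <;> [omega; exact ⟨by omega, by omega⟩])
  rw [e1, e2] at hsplit2
  have hdiag : ∑ p ∈ P.filter (fun p => p.1 = p.2), a p.1 * a p.2 = n := by
    have hb : ∑ p ∈ P.filter (fun p => p.1 = p.2), a p.1 * a p.2
        = ∑ i ∈ Icc 1 n, a i * a i := by
      refine Finset.sum_nbij' (fun p => p.1) (fun i => (i,i)) ?_ ?_ ?_ ?_ ?_
      · intro p hp
        obtain ⟨hp1, hp2⟩ := Finset.mem_filter.mp hp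
        rw [hP, Finset.mem_product, Finset.mem_Icc, Finset.mem_Icc] at hp1
        rw [Finset.mem_Icc]; exact hp1.1
      · intro i hi
        rw [Finset.mem_Icc] at hi
        refine Finset.mem_filter.mpr ⟨?_, rfl⟩
        rw [hP, Finset.mem_product]
        exact ⟨Finset.mem_Icc.mpr hi, Finset.mem_Icc.mpr hi⟩
      · intro p hp
        obtain ⟨_, hp2⟩ := Finset.mem_filter.mp hp
        exact Prod.ext rfl hp2
      · intro i _; rfl
      · intro p hp
        obtain ⟨_, hp2⟩ := Finset.mem_filter.mp hp
        rw [← hp2]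
    rw [hb]
    have : ∀ i ∈ Icc 1 n, a i * a i = 1 := by
      intro i hi
      rw [Finset.mem_Icc] at hi
      rcases ha i hi.1 hi.2 with h|h <;> simp [h]
    rw [Finset.sum_congr rfl this, Finset.sum_const, Nat.card_Icc, nsmul_eq_mul, mul_one]
    push_cast; omega
  have hswap : ∑ p ∈ P.filter (fun p => p.2 < p.1), a p.1 * a p.2
      = ∑ p ∈ P.filter (fun p => p.1 < p.2), a p.1 * a p.2 := by
    refine Finset.sum_nbij' Prod.swap Prod.swap ?_ ?_ ?_ ?_ ?_ <;> intro p hp <;>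
      simp only [hP, Finset.mem_filter, Finset.mem_product, Finset.mem_Icc, Prod.fst_swap,
        Prod.snd_swap] at *
    · exact ⟨⟨hp.1.2, hp.1.1⟩, hp.2⟩
    · exact ⟨⟨hp.1.2, hp.1.1⟩, hp.2⟩
    · rfl
    · rfl
    · exact mul_comm _ _
  have hE1 : ∑ p ∈ P.filter (fun p => p.1 < p.2), a p.1 * a p.2 = T := by
    rw [hTdef]
    have hsig : ∑ k ∈ Icc 1 (n-1), aperiodicCorr a n k
        = ∑ p ∈ (Icc 1 (n-1)).sigma (fun k => Icc 1 (n-k)), a p.2 * a (p.2 + p.1) := by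
      unfold aperiodicCorr
      rw [Finset.sum_sigma]
    rw [hsig]
    refine (Finset.sum_nbij' (fun p => (p.2, p.2 + p.1))
      (fun q => (⟨q.2 - q.1, q.1⟩ : Σ _ : ℕ, ℕ)) ?_ ?_ ?_ ?_ ?_).symm
    · intro p hp
      simp only [Finset.mem_sigma, Finset.mem_Icc] at hp
      simp only [hP, Finset.mem_filter, Finset.mem_product, Finset.mem_Icc]
      omega
    · intro q hq
      simp only [hP, Finset.mem_filter, Finset.mem_product, Finset.mem_Icc] at hq
      simp only [Finset.mem_sigma, Finset.mem_Icc]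
      omega
    · intro p hp
      simp only [Finset.mem_sigma, Finset.mem_Icc] at hp
      obtain ⟨k, j⟩ := p
      refine Sigma.ext ?_ ?_ <;> dsimp only
      · omega
      · rw [heq_eq_eq]
    · intro q hq
      simp only [hP, Finset.mem_filter, Finset.mem_product, Finset.mem_Icc] at hq
      refine Prod.ext rfl ?_
      dsimp only
      omega
    · intro p _
      rfl
  have hS2 : S ^ 2 = (n : ℤ) := by
    have : S * S = T + (T + (n:ℤ)) := by
      rw [hSS, ← hsplit1, ← hsplit2, hE1, hswap, hE1, hdiag]
    rw [sq, this, hT]; ring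
  refine ⟨?_, ?_, h4n⟩
  · have hn' : ((n:ℕ):ℝ) = (S:ℝ)^2 := by exact_mod_cast hS2.symm
    rw [Int.cast_abs, hn', Real.sqrt_sq_eq_abs]
  · set M := S.natAbs with hM
    have hnm : n = M ^ 2 := by
      have h1 : ((M:ℤ))^2 = (n:ℤ) := by
        rw [hM, ← Int.abs_eq_natAbs, sq_abs, hS2]
      exact_mod_cast h1.symm
    have h2S : (2:ℤ) ∣ S - n := by
      have h := sum_pm_two (Icc 1 n) a ?_
      · simpa [Nat.card_Icc] using h
      · intro j hj; rw [Finset.mem_Icc] at hj; exact ha j hj.1 hj.2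
    have hevenM : Even M := by
      rw [hM, Int.natAbs_even, Int.even_iff]
      omega
    obtain ⟨r, hr⟩ := hevenM
    have hn4 : n = 4 * r ^ 2 := by rw [hnm, hr]; ring
    refine ⟨r, ?_, hn4⟩
    rcases Nat.eq_zero_or_pos r with h|h
    · exfalso; rw [h] at hn4; simp at hn4; omega
    · exact h
end

section
/- Let a be a binary sequence of length n > 1 and let 1 ≤ k < n. Then C_{n−k}(a) ≡ T_k(a) (mod 4), where T_k(a) = Σ_{j=1}^{k} a_j a_{n+1−j}. -/
/-- `T_k(a) = ∑_{j=1}^{k} a_j a_{n+1-j}`. -/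
def barkerT (a : ℕ → ℤ) (n k : ℕ) : ℤ :=
  ∑ j ∈ Finset.Icc 1 k, a j * a (n + 1 - j)

lemma two_dvd_pm_sub {u v : ℤ} (hu : u = 1 ∨ u = -1) (hv : v = 1 ∨ v = -1) :
    (2 : ℤ) ∣ u - v := by
  rcases hu with h | h <;> rcases hv with h' | h' <;> simp [h, h']

theorem stmt_6 (n : ℕ) (hn : 1 < n) (a : ℕ → ℤ)
    (ha : ∀ j, 1 ≤ j → j ≤ n → a j = 1 ∨ a j = -1) :
    ∀ k, 1 ≤ k → k < n → aperiodicCorr a n (n - k) ≡ barkerT a n k [ZMOD 4] := by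
  intro k hk1 hkn
  have hsub : n - (n - k) = k := by omega
  rw [Int.modEq_iff_dvd]
  have h4 : ((4 : ℕ) : ℤ) = 4 := by norm_num
  rw [← h4, ← ZMod.intCast_zmod_eq_zero_iff_dvd]
  unfold aperiodicCorr barkerT
  rw [hsub]
  push_cast
  rw [← Finset.sum_sub_distrib]
  apply Finset.sum_involution (fun j _ => k + 1 - j)
  · intro j hj
    simp only [Finset.mem_Icc] at hj
    have h1 : j + (n - k) = n + 1 - (k + 1 - j) := by omega
    have h2 : (k + 1 - j) + (n - k) = n + 1 - j := by omega
    have key : (4 : ℤ) ∣ (a j * a (j + (n - k)) - a j * a (n + 1 - j))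
        + (a (k + 1 - j) * a ((k + 1 - j) + (n - k)) - a (k + 1 - j) * a (n + 1 - (k + 1 - j))) := by
      rw [h1, h2]
      have : (a j * a (n + 1 - (k + 1 - j)) - a j * a (n + 1 - j))
          + (a (k + 1 - j) * a (n + 1 - j) - a (k + 1 - j) * a (n + 1 - (k + 1 - j)))
          = (a j - a (k + 1 - j)) * (a (n + 1 - (k + 1 - j)) - a (n + 1 - j)) := by ring
      rw [this]
      have d1 : (2 : ℤ) ∣ a j - a (k + 1 - j) :=
        two_dvd_pm_sub (ha j (by omega) (by omega)) (ha (k + 1 - j) (by omega) (by omega))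
      have d2 : (2 : ℤ) ∣ a (n + 1 - (k + 1 - j)) - a (n + 1 - j) :=
        two_dvd_pm_sub (ha (n + 1 - (k + 1 - j)) (by omega) (by omega))
          (ha (n + 1 - j) (by omega) (by omega))
      exact mul_dvd_mul d1 d2
    have := (ZMod.intCast_zmod_eq_zero_iff_dvd _ 4).2 key
    push_cast at this ⊢
    linear_combination -this
  · intro j hj hf heq
    simp only [Finset.mem_Icc] at hj
    apply hf
    have h1 : j + (n - k) = n + 1 - j := by omega
    rw [h1]
    ring
  · intro j hj
    simp only [Finset.mem_Icc] at hj ⊢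
    omega
  · intro j hj
    simp only [Finset.mem_Icc] at hj
    show k + 1 - (k + 1 - j) = j
    omega
end

section
/- Let a be a weak symmetric binary sequence of length n and let 1 ≤ k < n. Then T_k(a) = 0 if k is even, and T_k(a) = a_k a_{n+1−k} if k is odd, where T_k(a) = Σ_{j=1}^{k} a_j a_{n+1−j}. -/
lemma barker_key (n : ℕ) (a : ℕ → ℤ)
    (ha : ∀ j, 1 ≤ j → j ≤ n → a j = 1 ∨ a j = -1)
    (h4 : 4 ∣ n)
    (hws : ∀ j, Odd j → 1 ≤ j → j < n / 2 →
      a j * a (j + 1) = -(a (n + 1 - j) * a (n - j))) :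
    ∀ j, Odd j → 1 ≤ j → j < n →
      a j * a (n + 1 - j) + a (j + 1) * a (n - j) = 0 := by
  have sq1 : ∀ j, 1 ≤ j → j ≤ n → a j * a j = 1 := by
    intro j h1 h2
    rcases ha j h1 h2 with h | h <;> rw [h] <;> norm_num
  intro j hodd h1 hn
  obtain ⟨m, hm⟩ := hodd
  obtain ⟨q, hq⟩ := h4
  have rel : a j * a (j + 1) + a (n + 1 - j) * a (n - j) = 0 := by
    by_cases hc : j < n / 2
    · have E := hws j ⟨m, hm⟩ h1 hc
      linarith
    · have hj' : Odd (n - j) := ⟨2 * q - m - 1, by omega⟩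
      have E := hws (n - j) hj' (by omega) (by omega)
      have e1 : n - j + 1 = n + 1 - j := by omega
      have e2 : n + 1 - (n - j) = j + 1 := by omega
      have e3 : n - (n - j) = j := by omega
      rw [e1, e2, e3] at E
      linarith
  have hs1 : a (j + 1) * a (j + 1) = 1 := sq1 _ (by omega) (by omega)
  have hs2 : a (n + 1 - j) * a (n + 1 - j) = 1 := sq1 _ (by omega) (by omega)
  linear_combination a (j + 1) * a (n + 1 - j) * rel -
    a j * a (n + 1 - j) * hs1 - a (j + 1) * a (n - j) * hs2

theorem stmt_7 (n : ℕ) (a : ℕ → ℤ)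
    (ha : ∀ j, 1 ≤ j → j ≤ n → a j = 1 ∨ a j = -1)
    -- `a` is weak symmetric:
    (h4 : 4 ∣ n)
    (hws : ∀ j, Odd j → 1 ≤ j → j < n / 2 →
      a j * a (j + 1) = -(a (n + 1 - j) * a (n - j))) :
    ∀ k, 1 ≤ k → k < n →
      (Even k → barkerT a n k = 0) ∧
      (Odd k → barkerT a n k = a k * a (n + 1 - k)) := by
  have key := barker_key n a ha h4 hws
  intro k hk
  induction k, hk using Nat.le_induction with
  | base =>
    intro _
    constructor
    · intro h; exact absurd h (by decide)
    · intro _; simp [barkerT]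
  | succ k hk ih =>
    intro hn
    have hkn : k < n := by omega
    obtain ⟨ih_even, ih_odd⟩ := ih hkn
    have hstep : barkerT a n (k + 1)
        = barkerT a n k + a (k + 1) * a (n + 1 - (k + 1)) := by
      unfold barkerT
      rw [Finset.sum_Icc_succ_top (by omega : 1 ≤ k + 1)]
    constructor
    · intro heven
      have hko : Odd k := Nat.not_even_iff_odd.mp (Nat.even_add_one.mp heven)
      have e1 : n + 1 - (k + 1) = n - k := by omega
      have hkey := key k hko hk hkn
      rw [hstep, ih_odd hko, e1]
      linarith
    · intro hodd
      have hke : Even k := by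
        have h := Nat.not_even_iff_odd.mpr hodd
        rw [Nat.even_add_one] at h
        exact not_not.mp h
      rw [hstep, ih_even hke]; ring
end

section
/- Let a be a Barker sequence of even length n ≥ 4. Then a is weak symmetric, and C_k(a) = −a_k a_{n+1−k} for every odd k with 1 ≤ k < n. -/
lemma aux_sum_prod (s : Finset ℕ) (t : ℕ → ℤ) (ht : ∀ j ∈ s, t j = 1 ∨ t j = -1) :
    ∃ B : ℕ, (∑ j ∈ s, t j) = (s.card : ℤ) - 2 * B ∧ (∏ j ∈ s, t j) = (-1) ^ B := by
  classical
  induction s using Finset.induction_on with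
  | empty => exact ⟨0, by simp⟩
  | @insert x s hx ih =>
    obtain ⟨B, hs, hp⟩ := ih (fun j hj => ht j (Finset.mem_insert_of_mem hj))
    rcases ht x (Finset.mem_insert_self _ _) with h1 | h1
    · refine ⟨B, ?_, ?_⟩
      · rw [Finset.sum_insert hx, h1, hs, Finset.card_insert_of_notMem hx]
        push_cast; ring
      · rw [Finset.prod_insert hx, h1, hp, one_mul]
    · refine ⟨B + 1, ?_, ?_⟩
      · rw [Finset.sum_insert hx, h1, hs, Finset.card_insert_of_notMem hx]
        push_cast; ring
      · rw [Finset.prod_insert hx, h1, hp, pow_succ]; ring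

lemma neg_one_pow_cancel {x : ℤ} {p q : ℕ} (h : (-1:ℤ)^p = (-1)^q * x) :
    x = (-1) ^ (p + q) := by
  have hq : ((-1:ℤ))^q * (-1)^q = 1 := by
    rw [← pow_add]; exact Even.neg_one_pow ⟨q, rfl⟩
  calc x = ((-1:ℤ)^q * (-1)^q) * x := by rw [hq, one_mul]
    _ = (-1)^q * ((-1)^q * x) := by ring
    _ = (-1)^q * (-1)^p := by rw [← h]
    _ = (-1)^(p+q) := by rw [← pow_add, Nat.add_comm]

lemma telescope (a : ℕ → ℤ) (n k : ℕ) (hk : k ≤ n)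
    (ha : ∀ j, 1 ≤ j → j ≤ n → a j = 1 ∨ a j = -1) :
    ∏ j ∈ Finset.Icc 1 (n - k), a j * a (j + k)
      = ∏ j ∈ Finset.Icc 1 k, a j * a (n + 1 - j) := by
  have hm : n - k + k = n := Nat.sub_add_cancel hk
  rw [Finset.prod_mul_distrib, Finset.prod_mul_distrib]
  have h2 : ∏ j ∈ Finset.Icc 1 (n - k), a (j + k) = ∏ j ∈ Finset.Icc (k + 1) n, a j := by
    have hmap := Finset.map_add_right_Icc 1 (n - k) k
    rw [hm, Nat.add_comm 1 k] at hmap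
    rw [← hmap, Finset.prod_map]
    rfl
  have h3 : ∏ j ∈ Finset.Icc 1 k, a (n + 1 - j) = ∏ j ∈ Finset.Icc (n - k + 1) n, a j := by
    refine Finset.prod_nbij' (fun j => n + 1 - j) (fun j => n + 1 - j) ?_ ?_ ?_ ?_ ?_
    · intro j hj; simp only [Finset.mem_Icc] at hj ⊢; omega
    · intro j hj; simp only [Finset.mem_Icc] at hj ⊢; omega
    · intro j hj; simp only [Finset.mem_Icc] at hj; show n + 1 - (n + 1 - j) = j; omega
    · intro j hj; simp only [Finset.mem_Icc] at hj; show n + 1 - (n + 1 - j) = j; omega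
    · intro j hj; rfl
  rw [h2, h3]
  have hIoc1 : ∀ x : ℕ, Finset.Icc 1 x = Finset.Ioc 0 x := by
    intro x; ext z; simp only [Finset.mem_Icc, Finset.mem_Ioc]; omega
  have hIoc2 : ∀ x y : ℕ, Finset.Icc (x + 1) y = Finset.Ioc x y := by
    intro x y; ext z; simp only [Finset.mem_Icc, Finset.mem_Ioc]; omega
  have Hu : (∏ j ∈ Finset.Icc 1 (n - k), a j) * (∏ j ∈ Finset.Icc (n - k + 1) n, a j)
      = ∏ j ∈ Finset.Icc 1 n, a j := by
    rw [hIoc1, hIoc1, hIoc2]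
    exact Finset.prod_Ioc_consecutive a (Nat.zero_le _) (by omega)
  have Hv : (∏ j ∈ Finset.Icc 1 k, a j) * (∏ j ∈ Finset.Icc (k + 1) n, a j)
      = ∏ j ∈ Finset.Icc 1 n, a j := by
    rw [hIoc1, hIoc1, hIoc2]
    exact Finset.prod_Ioc_consecutive a (Nat.zero_le _) (by omega)
  have sq : ∀ u v : ℕ, 1 ≤ u → v ≤ n →
      (∏ j ∈ Finset.Icc u v, a j) * (∏ j ∈ Finset.Icc u v, a j) = 1 := by
    intro u v h1 h2
    rw [← Finset.prod_mul_distrib]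
    apply Finset.prod_eq_one
    intro j hj; rw [Finset.mem_Icc] at hj
    rcases ha j (le_trans h1 hj.1) (le_trans hj.2 h2) with h | h <;> rw [h] <;> norm_num
  have h := Hu.trans Hv.symm
  have s2 := sq (n - k + 1) n (by omega) le_rfl
  have s4 := sq (k + 1) n (by omega) le_rfl
  linear_combination (∏ j ∈ Finset.Icc (n - k + 1) n, a j) *
      (∏ j ∈ Finset.Icc (k + 1) n, a j) * h
    - (∏ j ∈ Finset.Icc 1 (n - k), a j) * (∏ j ∈ Finset.Icc (k + 1) n, a j) * s2
    + (∏ j ∈ Finset.Icc 1 k, a j) * (∏ j ∈ Finset.Icc (n - k + 1) n, a j) * s4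


theorem stmt_10 (n : ℕ) (hn : 4 ≤ n) (hne : Even n) (a : ℕ → ℤ)
    (ha : ∀ j, 1 ≤ j → j ≤ n → a j = 1 ∨ a j = -1)
    (hbarker : ∀ k, 1 ≤ k → k ≤ n - 1 → aperiodicCorr a n k ∈ ({-1, 0, 1} : Set ℤ)) :
    -- `a` is weak symmetric:
    (4 ∣ n ∧ ∀ j, Odd j → 1 ≤ j → j < n / 2 →
      a j * a (j + 1) = -(a (n + 1 - j) * a (n - j))) ∧
    -- and `C_k = -a_k a_{n+1-k}` for odd `k`:
    (∀ k, Odd k → 1 ≤ k → k < n →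
      aperiodicCorr a n k = -(a k * a (n + 1 - k))) := by
  obtain ⟨half, hhalf⟩ := hne
  have hsq : ∀ i, 1 ≤ i → i ≤ n → a i * a i = 1 := by
    intro i h1 h2; rcases ha i h1 h2 with h | h <;> rw [h] <;> norm_num
  have hterm : ∀ k, k ≤ n - 1 → ∀ j ∈ Finset.Icc 1 (n - k),
      a j * a (j + k) = 1 ∨ a j * a (j + k) = -1 := by
    intro k hk j hj
    rw [Finset.mem_Icc] at hj
    rcases ha j hj.1 (by omega) with h1 | h1 <;>
      rcases ha (j + k) (by omega) (by omega) with h2 | h2 <;>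
      rw [h1, h2] <;> norm_num
  have prod2 : ∀ f : ℕ → ℤ, ∏ j ∈ Finset.Icc 1 2, f j = f 1 * f 2 := by
    intro f
    rw [show (2 : ℕ) = 1 + 1 from rfl, Finset.prod_Icc_succ_top (by omega),
      Finset.Icc_self, Finset.prod_singleton]
  -- Key lemma for even k ≥ 1
  have keyEven : ∀ k e : ℕ, 1 ≤ k → k ≤ n - 1 → n - k = 2 * e →
      ∏ j ∈ Finset.Icc 1 k, a j * a (n + 1 - j) = (-1) ^ e := by
    intro k e hk1 hk2 hke
    obtain ⟨B, hs, hp⟩ := aux_sum_prod _ _ (hterm k hk2)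
    have hcard : (Finset.Icc 1 (n - k)).card = 2 * e := by
      rw [Nat.card_Icc]; omega
    rw [hcard] at hs
    have hC := hbarker k hk1 hk2
    simp only [Set.mem_insert_iff, Set.mem_singleton_iff] at hC
    have hsum : aperiodicCorr a n k = ∑ j ∈ Finset.Icc 1 (n - k), a j * a (j + k) := rfl
    rw [hsum] at hC
    have hB : B = e := by
      rcases hC with h | h | h <;> rw [h] at hs <;> push_cast at hs <;> omega
    rw [← telescope a n k (by omega) ha, hp, hB]
  -- 4 ∣ n
  have h4 : 4 ∣ n := by
    have h2 := keyEven 2 (half - 1) (by omega) (by omega) (by omega)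
    have h3 := keyEven (n - 2) 1 (by omega) (by omega) (by omega)
    have htel := telescope a n (n - 2) (by omega) ha
    rw [show n - (n - 2) = 2 by omega] at htel
    rw [h3] at htel
    rw [prod2] at h2 htel
    rw [show n + 1 - 1 = n by omega, show n + 1 - 2 = n - 1 by omega] at h2
    rw [show 1 + (n - 2) = n - 1 by omega, show 2 + (n - 2) = n by omega] at htel
    have hval : (-1 : ℤ) ^ (half - 1) = (-1 : ℤ) ^ 1 := by
      rw [← h2, ← htel]; ring
    rcases Nat.even_or_odd (half - 1) with he | ho
    · rw [Even.neg_one_pow he] at hval; norm_num at hval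
    · obtain ⟨t, ht⟩ := ho; omega
  -- keyD : even k including k = 0
  have keyD : ∀ k e : ℕ, k ≤ n - 1 → n - k = 2 * e →
      ∏ j ∈ Finset.Icc 1 k, a j * a (n + 1 - j) = (-1) ^ e := by
    intro k e hk2 hke
    rcases Nat.eq_zero_or_pos k with rfl | hk1
    · rw [show Finset.Icc 1 0 = (∅ : Finset ℕ) from rfl, Finset.prod_empty]
      obtain ⟨m, hm⟩ := h4
      exact (Even.neg_one_pow ⟨m, by omega⟩).symm
    · exact keyEven k e hk1 hk2 hke
  -- pair products
  have keyYY : ∀ j : ℕ, Odd j → 1 ≤ j → j + 1 ≤ n - 1 →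
      (a j * a (n + 1 - j)) * (a (j + 1) * a (n - j)) = -1 := by
    intro j hj hj1 hj2
    obtain ⟨i, rfl⟩ : ∃ i, j = i + 1 := ⟨j - 1, by omega⟩
    obtain ⟨t, ht⟩ := hj
    obtain ⟨e, he⟩ : ∃ e, n - (i + 2) = 2 * e := ⟨(n - (i + 2)) / 2, by omega⟩
    have hA := keyD i (e + 1) (by omega) (by omega)
    have hB := keyD (i + 2) e (by omega) (by omega)
    rw [show i + 2 = i + 1 + 1 from rfl,
      Finset.prod_Icc_succ_top (by omega : (1:ℕ) ≤ i + 1 + 1),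
      Finset.prod_Icc_succ_top (by omega : (1:ℕ) ≤ i + 1), hA] at hB
    have hx := neg_one_pow_cancel
      (x := (a (i + 1) * a (n + 1 - (i + 1))) * (a (i + 1 + 1) * a (n + 1 - (i + 1 + 1))))
      (p := e) (q := e + 1) (by rw [← hB]; ring)
    rw [show n - (i + 1) = n + 1 - (i + 1 + 1) by omega]
    rw [hx]
    exact Odd.neg_one_pow ⟨e, by omega⟩
  refine ⟨⟨h4, ?_⟩, ?_⟩
  · -- weak symmetry
    intro j hj h1 h2
    have H := keyYY j hj h1 (by omega)
    have s1 := hsq (n + 1 - j) (by omega) (by omega)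
    have s2 := hsq (n - j) (by omega) (by omega)
    linear_combination (a (n + 1 - j) * a (n - j)) * H
      - (a j * a (j + 1) * a (n - j) * a (n - j)) * s1
      - (a j * a (j + 1)) * s2
  · -- C_k = -a_k a_{n+1-k}
    intro k hk h1 h2
    obtain ⟨i, rfl⟩ : ∃ i, k = i + 1 := ⟨k - 1, by omega⟩
    obtain ⟨t, ht⟩ := hk
    obtain ⟨e, he⟩ : ∃ e, n - (i + 1) = 2 * e + 1 := ⟨(n - (i + 1)) / 2, by omega⟩
    have hk2 : i + 1 ≤ n - 1 := by omega
    obtain ⟨B, hs, hp⟩ := aux_sum_prod _ _ (hterm (i + 1) hk2)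
    have hcard : (Finset.Icc 1 (n - (i + 1))).card = 2 * e + 1 := by
      rw [Nat.card_Icc]; omega
    rw [hcard] at hs
    have hC := hbarker (i + 1) h1 hk2
    simp only [Set.mem_insert_iff, Set.mem_singleton_iff] at hC
    have hsum : aperiodicCorr a n (i + 1)
        = ∑ j ∈ Finset.Icc 1 (n - (i + 1)), a j * a (j + (i + 1)) := rfl
    rw [hsum] at hC
    have htel := telescope a n (i + 1) (by omega) ha
    rw [Finset.prod_Icc_succ_top (by omega : (1:ℕ) ≤ i + 1)] at htel
    have hYprev := keyD i (e + 1) (by omega) (by omega)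
    rw [hYprev, hp] at htel
    have hx := neg_one_pow_cancel htel
    rw [hsum]
    rcases hC with h | h | h
    · -- sum = -1, B = e + 1, y = 1
      have hB : B = e + 1 := by rw [h] at hs; push_cast at hs; omega
      rw [hB] at hx
      have hy : a (i + 1) * a (n + 1 - (i + 1)) = 1 := by
        rw [hx]; exact Even.neg_one_pow ⟨e + 1, by omega⟩
      rw [h, hy]
    · -- sum = 0 impossible
      exfalso; rw [h] at hs; push_cast at hs; omega
    · -- sum = 1, B = e, y = -1
      have hB : B = e := by rw [h] at hs; push_cast at hs; omega
      rw [hB] at hx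
      have hy : a (i + 1) * a (n + 1 - (i + 1)) = -1 := by
        rw [hx]; exact Odd.neg_one_pow ⟨e, by omega⟩
      rw [h, hy]; norm_num
end

section
/- Let a be a binary sequence of length n > 1 and let 1 ≤ k < n with k even. Then C_{n−k}(a) = Σ_{j=1}^{k/2} a_j a_{k+1−j} (δ_j + δ_{k+1−j}), where δ_i = a_i a_{n+1−i}. -/
/-- `δ_i = a_i a_{n+1-i}`. -/
def barkerDelta (a : ℕ → ℤ) (n i : ℕ) : ℤ := a i * a (n + 1 - i)

theorem stmt_11 (n : ℕ) (hn : 1 < n) (a : ℕ → ℤ)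
    (ha : ∀ j, 1 ≤ j → j ≤ n → a j = 1 ∨ a j = -1)
    (k : ℕ) (hk1 : 1 ≤ k) (hkn : k < n) (hke : Even k) :
    aperiodicCorr a n (n - k) =
      ∑ j ∈ Finset.Icc 1 (k / 2),
        a j * a (k + 1 - j) * (barkerDelta a n j + barkerDelta a n (k + 1 - j)) := by
  obtain ⟨m, hm⟩ := hke
  have hm1 : 1 ≤ m := by omega
  have hk2 : k / 2 = m := by omega
  have hsq : ∀ j, 1 ≤ j → j ≤ n → a j * a j = 1 := by
    intro j h1 h2; rcases ha j h1 h2 with h | h <;> simp [h]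
  have hLHS : aperiodicCorr a n (n - k) = ∑ j ∈ Finset.Ioc 0 k, a j * a (j + (n - k)) := by
    unfold aperiodicCorr
    rw [show n - (n - k) = k by omega, ← Finset.Icc_add_one_left_eq_Ioc, zero_add]
  have hsplit : ∑ j ∈ Finset.Ioc 0 k, a j * a (j + (n - k)) =
      (∑ j ∈ Finset.Ioc 0 m, a j * a (j + (n - k))) +
      ∑ j ∈ Finset.Ioc m k, a j * a (j + (n - k)) := by
    rw [← Finset.sum_Ioc_consecutive _ (by omega : 0 ≤ m) (by omega : m ≤ k)]
  have hre : ∑ j ∈ Finset.Ioc m k, a j * a (j + (n - k)) =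
      ∑ j ∈ Finset.Ioc 0 m, a (k + 1 - j) * a (k + 1 - j + (n - k)) := by
    refine Finset.sum_nbij' (fun j => k + 1 - j) (fun j => k + 1 - j) ?_ ?_ ?_ ?_ ?_ <;>
        intro j hj <;> simp only [Finset.mem_Ioc] at *
    · omega
    · omega
    · omega
    · omega
    · rw [show k + 1 - (k + 1 - j) = j by omega]
  rw [hLHS, hsplit, hre, hk2, ← Finset.Icc_add_one_left_eq_Ioc, ← Finset.sum_add_distrib]
  apply Finset.sum_congr rfl
  intro j hj
  simp only [Finset.mem_Icc] at hj
  have h1 : k + 1 - j + (n - k) = n + 1 - j := by omega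
  have h2 : n + 1 - (k + 1 - j) = j + (n - k) := by omega
  unfold barkerDelta
  rw [h1, h2]
  have e1 : a j * a (k + 1 - j) * (a j * a (n + 1 - j)) = (a j * a j) * (a (k + 1 - j) * a (n + 1 - j)) := by ring
  have e2 : a j * a (k + 1 - j) * (a (k + 1 - j) * a (j + (n - k))) = (a (k + 1 - j) * a (k + 1 - j)) * (a j * a (j + (n - k))) := by ring
  rw [mul_add, e1, e2, hsq j (by omega) (by omega), hsq (k + 1 - j) (by omega) (by omega), one_mul, one_mul, add_comm]
end

section
/- Let a be a binary sequence of length n > 1 and let 1 ≤ k < n with k odd. Then C_{n−k}(a) = δ_{(k+1)/2} + Σ_{j=1}^{(k−1)/2} a_j a_{k+1−j} (δ_j + δ_{k+1−j}), where δ_i = a_i a_{n+1−i}. -/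
theorem stmt_12 (n : ℕ) (hn : 1 < n) (a : ℕ → ℤ)
    (ha : ∀ j, 1 ≤ j → j ≤ n → a j = 1 ∨ a j = -1)
    (k : ℕ) (hk1 : 1 ≤ k) (hkn : k < n) (hko : Odd k) :
    aperiodicCorr a n (n - k) =
      barkerDelta a n ((k + 1) / 2) +
      ∑ j ∈ Finset.Icc 1 ((k - 1) / 2),
        a j * a (k + 1 - j) * (barkerDelta a n j + barkerDelta a n (k + 1 - j)) := by
  have hsq : ∀ j, 1 ≤ j → j ≤ n → a j * a j = 1 := by
    intro j h1 h2
    rcases ha j h1 h2 with h | h <;> rw [h] <;> ring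
  obtain ⟨m, hm⟩ := hko
  subst hm
  have hd1 : (2*m+1+1)/2 = m+1 := by omega
  have hd2 : (2*m+1-1)/2 = m := by omega
  rw [hd1, hd2]
  unfold aperiodicCorr barkerDelta
  have hsub : n - (n - (2*m+1)) = 2*m+1 := by omega
  rw [hsub]
  have hsplit : Finset.Icc 1 (2*m+1)
      = (Finset.Icc 1 m ∪ {m+1}) ∪ Finset.Icc (m+2) (2*m+1) := by
    ext x
    simp only [Finset.mem_Icc, Finset.mem_union, Finset.mem_singleton]
    omega
  have hdisj1 : Disjoint (Finset.Icc 1 m ∪ {m+1}) (Finset.Icc (m+2) (2*m+1)) := by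
    simp only [Finset.disjoint_left, Finset.mem_Icc, Finset.mem_union, Finset.mem_singleton]
    omega
  have hdisj2 : Disjoint (Finset.Icc 1 m) ({m+1} : Finset ℕ) := by
    simp only [Finset.disjoint_left, Finset.mem_Icc, Finset.mem_singleton]
    omega
  rw [hsplit, Finset.sum_union hdisj1, Finset.sum_union hdisj2, Finset.sum_singleton]
  have h3 : ∑ j ∈ Finset.Icc (m+2) (2*m+1), a j * a (j + (n - (2*m+1)))
      = ∑ j ∈ Finset.Icc 1 m, a (2*m+2-j) * a (2*m+2-j + (n-(2*m+1))) := by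
    apply Finset.sum_nbij' (fun j => 2*m+2-j) (fun j => 2*m+2-j) <;>
      simp only [Finset.mem_Icc] <;> intros <;> first | omega | (congr 2 <;> omega)
  rw [h3]
  have hcenter : a (m+1) * a (m+1 + (n - (2*m+1))) = a (m+1) * a (n + 1 - (m+1)) := by
    congr 2
    omega
  have hterm : ∀ j ∈ Finset.Icc 1 m,
      a j * a (j + (n - (2*m+1))) + a (2*m+2-j) * a (2*m+2-j + (n-(2*m+1)))
      = a j * a (2*m+1+1-j) * (a j * a (n+1-j) + a (2*m+1+1-j) * a (n+1-(2*m+1+1-j))) := by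
    intro j hj
    simp only [Finset.mem_Icc] at hj
    have e1 : 2*m+1+1-j = 2*m+2-j := by omega
    have e2 : n+1-(2*m+2-j) = j + (n - (2*m+1)) := by omega
    have e3 : 2*m+2-j + (n-(2*m+1)) = n+1-j := by omega
    rw [e1, e2, e3]
    have hA := hsq j hj.1 (by omega)
    have hB := hsq (2*m+2-j) (by omega) (by omega)
    linear_combination (-(a (2*m+2-j) * a (n+1-j))) * hA
      - (a j * a (j + (n - (2*m+1)))) * hB
  rw [hcenter, ← Finset.sum_congr rfl hterm, Finset.sum_add_distrib]
  ring
end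

section
/- Let a be a binary sequence of even length n = 2m and let 1 ≤ k < m with k even. Then C_k(a) = Σ_{j=1}^{m−k} a_j a_{j+k} (1 + δ_j δ_{j+k}) + Σ_{j=1}^{k/2} a_{j+m−k} a_{m+1−j} (δ_{j+m−k} + δ_{m+1−j}), where δ_i = a_i a_{n+1−i}. -/
lemma key1 (x y u v : ℤ) (hx : x * x = 1) (hy : y * y = 1) :
    x * y * (1 + (x * u) * (y * v)) = x * y + v * u := by
  linear_combination (y * y * u * v) * hx + (u * v) * hy

lemma key2 (x y u v : ℤ) (hx : x * x = 1) (hy : y * y = 1) :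
    x * y * (x * u + y * v) = y * u + x * v := by
  linear_combination (u * y) * hx + (x * v) * hy

theorem stmt_13 (n m : ℕ) (hm : 1 ≤ m) (hnm : n = 2 * m) (a : ℕ → ℤ)
    (ha : ∀ j, 1 ≤ j → j ≤ n → a j = 1 ∨ a j = -1)
    (k : ℕ) (hk1 : 1 ≤ k) (hkm : k < m) (hke : Even k) :
    aperiodicCorr a n k =
      (∑ j ∈ Finset.Icc 1 (m - k),
        a j * a (j + k) * (1 + barkerDelta a n j * barkerDelta a n (j + k))) +
      ∑ j ∈ Finset.Icc 1 (k / 2),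
        a (j + m - k) * a (m + 1 - j) *
          (barkerDelta a n (j + m - k) + barkerDelta a n (m + 1 - j)) := by
  have hsq : ∀ i, 1 ≤ i → i ≤ n → a i * a i = 1 := by
    intro i h1 h2
    rcases ha i h1 h2 with h | h <;> rw [h] <;> norm_num
  obtain ⟨t, ht⟩ := hke
  have ht1 : 1 ≤ t := by omega
  have hk2 : k / 2 = t := by omega
  set f : ℕ → ℤ := fun i => a i * a (i + k) with hf
  have hIcc : ∀ N : ℕ, Finset.Icc 1 N = Finset.Ioc 0 N := by
    intro N; ext x; simp [Nat.lt_iff_add_one_le]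
  -- Step B : first RHS sum
  have hB : (∑ j ∈ Finset.Ioc 0 (m - k),
        a j * a (j + k) * (1 + barkerDelta a n j * barkerDelta a n (j + k))) =
      (∑ j ∈ Finset.Ioc 0 (m - k), f j) + ∑ i ∈ Finset.Ioc m (n - k), f i := by
    have hterm : ∀ j ∈ Finset.Ioc 0 (m - k),
        a j * a (j + k) * (1 + barkerDelta a n j * barkerDelta a n (j + k)) =
        f j + f (n + 1 - k - j) := by
      intro j hj
      simp only [Finset.mem_Ioc] at hj
      have e1 : n + 1 - (j + k) = n + 1 - k - j := by omega
      have e2 : n + 1 - k - j + k = n + 1 - j := by omega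
      simp only [barkerDelta, hf, e1, e2]
      exact key1 _ _ _ _ (hsq j (by omega) (by omega))
        (hsq (j + k) (by omega) (by omega))
    rw [Finset.sum_congr rfl hterm, Finset.sum_add_distrib]
    congr 1
    refine Finset.sum_nbij' (fun j => n + 1 - k - j) (fun i => n + 1 - k - i)
      ?_ ?_ ?_ ?_ ?_ <;> intro x hx <;> simp only [Finset.mem_Ioc] at hx ⊢ <;>
      first | omega | rfl
  -- Step C : second RHS sum
  have hC : (∑ j ∈ Finset.Ioc 0 t,
        a (j + m - k) * a (m + 1 - j) *
          (barkerDelta a n (j + m - k) + barkerDelta a n (m + 1 - j))) =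
      (∑ i ∈ Finset.Ioc (m - t) m, f i) + ∑ i ∈ Finset.Ioc (m - k) (m - t), f i := by
    have hterm : ∀ j ∈ Finset.Ioc 0 t,
        a (j + m - k) * a (m + 1 - j) *
          (barkerDelta a n (j + m - k) + barkerDelta a n (m + 1 - j)) =
        f (m + 1 - j) + f (j + m - k) := by
      intro j hj
      simp only [Finset.mem_Ioc] at hj
      have e1 : n + 1 - (j + m - k) = (m + 1 - j) + k := by omega
      have e2 : n + 1 - (m + 1 - j) = (j + m - k) + k := by omega
      simp only [barkerDelta, hf, e1, e2]
      exact key2 _ _ _ _ (hsq (j + m - k) (by omega) (by omega))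
        (hsq (m + 1 - j) (by omega) (by omega))
    rw [Finset.sum_congr rfl hterm, Finset.sum_add_distrib]
    congr 1
    · refine Finset.sum_nbij' (fun j => m + 1 - j) (fun i => m + 1 - i)
        ?_ ?_ ?_ ?_ ?_ <;> intro x hx <;> simp only [Finset.mem_Ioc] at hx ⊢ <;>
        first | omega | rfl
    · refine Finset.sum_nbij' (fun j => j + m - k) (fun i => i - (m - k))
        ?_ ?_ ?_ ?_ ?_ <;> intro x hx <;> simp only [Finset.mem_Ioc] at hx ⊢ <;>
        first | omega | rfl
  -- Step A : split the LHS
  have hA : (∑ j ∈ Finset.Ioc 0 (n - k), f j) =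
      (((∑ j ∈ Finset.Ioc 0 (m - k), f j) + ∑ j ∈ Finset.Ioc (m - k) (m - t), f j)
        + ∑ j ∈ Finset.Ioc (m - t) m, f j) + ∑ j ∈ Finset.Ioc m (n - k), f j := by
    rw [Finset.sum_Ioc_consecutive _ (by omega : 0 ≤ m - k) (by omega : m - k ≤ m - t),
      Finset.sum_Ioc_consecutive _ (by omega : 0 ≤ m - t) (by omega : m - t ≤ m),
      Finset.sum_Ioc_consecutive _ (by omega : (0:ℕ) ≤ m) (by omega : m ≤ n - k)]
  rw [aperiodicCorr, hIcc, hIcc, hk2, hIcc, hB, hC]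
  rw [show (∑ j ∈ Finset.Ioc 0 (n - k), a j * a (j + k)) =
    ∑ j ∈ Finset.Ioc 0 (n - k), f j from rfl, hA]
  ring
end

section
/- Let a be a binary sequence of even length n = 2m and let 1 ≤ k < m with k odd. Then C_k(a) = δ_{(n−k+1)/2} + Σ_{j=1}^{m−k} a_j a_{j+k} (1 + δ_j δ_{j+k}) + Σ_{j=1}^{(k−1)/2} a_{j+m−k} a_{m+1−j} (δ_{j+m−k} + δ_{m+1−j}), where δ_i = a_i a_{n+1−i}. -/
set_option maxHeartbeats 1000000 in
theorem stmt_14 (n m : ℕ) (hm : 1 ≤ m) (hnm : n = 2 * m) (a : ℕ → ℤ)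
    (ha : ∀ j, 1 ≤ j → j ≤ n → a j = 1 ∨ a j = -1)
    (k : ℕ) (hk1 : 1 ≤ k) (hkm : k < m) (hko : Odd k) :
    aperiodicCorr a n k =
      barkerDelta a n ((n - k + 1) / 2) +
      (∑ j ∈ Finset.Icc 1 (m - k),
        a j * a (j + k) * (1 + barkerDelta a n j * barkerDelta a n (j + k))) +
      ∑ j ∈ Finset.Icc 1 ((k - 1) / 2),
        a (j + m - k) * a (m + 1 - j) *
          (barkerDelta a n (j + m - k) + barkerDelta a n (m + 1 - j)) := by
  obtain ⟨t, ht⟩ := hko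
  obtain ⟨r, hr⟩ : ∃ r, m = 2 * t + r + 2 := ⟨m - (2 * t + 2), by omega⟩
  subst hnm ht hr
  have sq : ∀ i, 1 ≤ i → i ≤ 2 * (2 * t + r + 2) → a i * a i = 1 := by
    intro i h1 h2; rcases ha i h1 h2 with h | h <;> rw [h] <;> ring
  simp only [aperiodicCorr, barkerDelta]
  have e1 : 2 * (2 * t + r + 2) - (2 * t + 1) = 2 * t + 2 * r + 3 := by omega
  have e2 : (2 * t + 2 * r + 3 + 1) / 2 = t + r + 2 := by omega
  have e3 : 2 * t + r + 2 - (2 * t + 1) = r + 1 := by omega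
  have e4 : (2 * t + 1 - 1) / 2 = t := by omega
  rw [e1, e2, e3, e4]
  -- LHS splitting
  have icc_ioc : ∀ N : ℕ, Finset.Icc 1 N = Finset.Ioc 0 N := fun N => Finset.Icc_add_one_left_eq_Ioc 0 N
  rw [icc_ioc, icc_ioc, icc_ioc]
  have hsplit : ∑ j ∈ Finset.Ioc 0 (2 * t + 2 * r + 3), a j * a (j + (2 * t + 1)) =
      (∑ j ∈ Finset.Ioc 0 (t + r + 2), a j * a (j + (2 * t + 1))) +
      ∑ j ∈ Finset.Ioc (t + r + 2) (2 * t + 2 * r + 3), a j * a (j + (2 * t + 1)) := by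
    rw [Finset.sum_Ioc_consecutive _ (by omega) (by omega)]
  rw [hsplit, Finset.sum_Ioc_succ_top (by omega : 0 ≤ t + r + 1)]
  -- reflect the top part
  have hrefl : ∑ j ∈ Finset.Ioc (t + r + 2) (2 * t + 2 * r + 3), a j * a (j + (2 * t + 1)) =
      ∑ j ∈ Finset.Ioc 0 (t + r + 1),
        a (2 * t + 2 * r + 4 - j) * a (4 * t + 2 * r + 5 - j) := by
    refine Finset.sum_nbij' (fun j => 2 * t + 2 * r + 4 - j) (fun j => 2 * t + 2 * r + 4 - j)
      ?_ ?_ ?_ ?_ ?_ <;> intro x hx <;> simp only [Finset.mem_Ioc] at hx ⊢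
    · omega
    · omega
    · omega
    · omega
    · have h1 : 2 * t + 2 * r + 4 - (2 * t + 2 * r + 4 - x) = x := by omega
      have h2 : 4 * t + 2 * r + 5 - (2 * t + 2 * r + 4 - x) = x + (2 * t + 1) := by omega
      rw [h1, h2]
  rw [hrefl]
  -- split the combined sum
  have hsplit2 : ∑ j ∈ Finset.Ioc 0 (t + r + 1),
      (a j * a (j + (2 * t + 1)) + a (2 * t + 2 * r + 4 - j) * a (4 * t + 2 * r + 5 - j)) =
      (∑ j ∈ Finset.Ioc 0 (r + 1),
        (a j * a (j + (2 * t + 1)) + a (2 * t + 2 * r + 4 - j) * a (4 * t + 2 * r + 5 - j))) +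
      ∑ j ∈ Finset.Ioc (r + 1) (t + r + 1),
        (a j * a (j + (2 * t + 1)) + a (2 * t + 2 * r + 4 - j) * a (4 * t + 2 * r + 5 - j)) := by
    rw [Finset.sum_Ioc_consecutive _ (by omega) (by omega)]
  -- middle term
  have hmid : a (t + r + 2) * a (t + r + 2 + (2 * t + 1)) =
      a (t + r + 2) * a (2 * (2 * t + r + 2) + 1 - (t + r + 2)) := by
    congr 1; congr 1; omega
  -- first paired sum equals second RHS sum
  have hfirst : ∑ j ∈ Finset.Ioc 0 (r + 1),
      (a j * a (j + (2 * t + 1)) + a (2 * t + 2 * r + 4 - j) * a (4 * t + 2 * r + 5 - j)) =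
      ∑ j ∈ Finset.Ioc 0 (r + 1), a j * a (j + (2 * t + 1)) *
        (1 + a j * a (2 * (2 * t + r + 2) + 1 - j) *
          (a (j + (2 * t + 1)) * a (2 * (2 * t + r + 2) + 1 - (j + (2 * t + 1))))) := by
    refine Finset.sum_congr rfl fun j hj => ?_
    simp only [Finset.mem_Ioc] at hj
    have i1 : 2 * (2 * t + r + 2) + 1 - j = 4 * t + 2 * r + 5 - j := by omega
    have i2 : 2 * (2 * t + r + 2) + 1 - (j + (2 * t + 1)) = 2 * t + 2 * r + 4 - j := by omega
    rw [i1, i2]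
    have h1 := sq j (by omega) (by omega)
    have h2 := sq (j + (2 * t + 1)) (by omega) (by omega)
    linear_combination (-(a (2 * t + 2 * r + 4 - j) * a (4 * t + 2 * r + 5 - j))) * h1 +
      (-(a (2 * t + 2 * r + 4 - j) * a (4 * t + 2 * r + 5 - j) * a j * a j)) * h2
  -- tail sum equals third RHS sum
  have htail : ∑ j ∈ Finset.Ioc (r + 1) (t + r + 1),
      (a j * a (j + (2 * t + 1)) + a (2 * t + 2 * r + 4 - j) * a (4 * t + 2 * r + 5 - j)) =
      ∑ j ∈ Finset.Ioc 0 t, a (j + (2 * t + r + 2) - (2 * t + 1)) * a (2 * t + r + 2 + 1 - j) *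
        (a (j + (2 * t + r + 2) - (2 * t + 1)) *
          a (2 * (2 * t + r + 2) + 1 - (j + (2 * t + r + 2) - (2 * t + 1))) +
         a (2 * t + r + 2 + 1 - j) * a (2 * (2 * t + r + 2) + 1 - (2 * t + r + 2 + 1 - j))) := by
    refine Finset.sum_nbij' (fun j => j - (r + 1)) (fun j => j + (r + 1)) ?_ ?_ ?_ ?_ ?_ <;>
      intro x hx <;> simp only [Finset.mem_Ioc] at hx ⊢
    · omega
    · omega
    · omega
    · omega
    · have i1 : x - (r + 1) + (2 * t + r + 2) - (2 * t + 1) = x := by omega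
      have i2 : 2 * t + r + 2 + 1 - (x - (r + 1)) = 2 * t + 2 * r + 4 - x := by omega
      have i3 : 2 * (2 * t + r + 2) + 1 - x = 4 * t + 2 * r + 5 - x := by omega
      have i4 : 2 * (2 * t + r + 2) + 1 - (2 * t + 2 * r + 4 - x) = x + (2 * t + 1) := by omega
      rw [i1, i2, i3, i4]
      have h1 := sq x (by omega) (by omega)
      have h2 := sq (2 * t + 2 * r + 4 - x) (by omega) (by omega)
      linear_combination (-(a (2 * t + 2 * r + 4 - x) * a (4 * t + 2 * r + 5 - x))) * h1 +
        (-(a x * a (x + (2 * t + 1)))) * h2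
  have hpair : (∑ j ∈ Finset.Ioc 0 (t + r + 1), a j * a (j + (2 * t + 1))) +
      ∑ j ∈ Finset.Ioc 0 (t + r + 1), a (2 * t + 2 * r + 4 - j) * a (4 * t + 2 * r + 5 - j) =
      (∑ j ∈ Finset.Ioc 0 (r + 1), a j * a (j + (2 * t + 1)) *
        (1 + a j * a (2 * (2 * t + r + 2) + 1 - j) *
          (a (j + (2 * t + 1)) * a (2 * (2 * t + r + 2) + 1 - (j + (2 * t + 1)))))) +
      ∑ j ∈ Finset.Ioc 0 t, a (j + (2 * t + r + 2) - (2 * t + 1)) * a (2 * t + r + 2 + 1 - j) *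
        (a (j + (2 * t + r + 2) - (2 * t + 1)) *
          a (2 * (2 * t + r + 2) + 1 - (j + (2 * t + r + 2) - (2 * t + 1))) +
         a (2 * t + r + 2 + 1 - j) * a (2 * (2 * t + r + 2) + 1 - (2 * t + r + 2 + 1 - j))) := by
    rw [← Finset.sum_add_distrib, hsplit2, hfirst, htail]
  have e5 : t + r + 1 + 1 = t + r + 2 := by omega
  rw [e5, hmid]
  linear_combination hpair
end

section
/- Let a be a strong symmetric binary sequence of length n = 2m, and let b be the binary sequence of length m with b_j = a_j for 1 ≤ j ≤ m. If k is even with 1 ≤ k < n, then C_k(a) = 2 C_k(b) when k < m, and C_k(a) = 0 when k ≥ m. -/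
theorem stmt_15 (n m : ℕ) (hm : 1 ≤ m) (hnm : n = 2 * m) (a : ℕ → ℤ)
    (ha : ∀ j, 1 ≤ j → j ≤ n → a j = 1 ∨ a j = -1)
    -- `a` is strong symmetric:
    (h4 : 4 ∣ n)
    (hss : ∀ j, 1 ≤ j → j ≤ n / 2 → a j * a (n + 1 - j) = (-1 : ℤ) ^ j)
    -- `b` is the first half of `a`:
    (b : ℕ → ℤ) (hb : ∀ j, 1 ≤ j → j ≤ m → b j = a j)
    (k : ℕ) (hk1 : 1 ≤ k) (hkn : k < n) (hke : Even k) :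
    (k < m → aperiodicCorr a n k = 2 * aperiodicCorr b m k) ∧
    (m ≤ k → aperiodicCorr a n k = 0) := by
  obtain ⟨c, hc⟩ := hke
  obtain ⟨d, hd⟩ := h4
  have hsq : ∀ j, 1 ≤ j → j ≤ n → a j * a j = 1 := by
    intro j h1 h2
    rcases ha j h1 h2 with h | h <;> rw [h] <;> ring
  have hsym : ∀ j, 1 ≤ j → j ≤ m → a (n + 1 - j) = (-1 : ℤ) ^ j * a j := by
    intro j h1 h2
    have h := hss j h1 (by omega)
    have hs := hsq j h1 (by omega)
    calc a (n + 1 - j) = (a j * a j) * a (n + 1 - j) := by rw [hs]; ring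
      _ = a j * (a j * a (n + 1 - j)) := by ring
      _ = a j * (-1) ^ j := by rw [h]
      _ = (-1) ^ j * a j := by ring
  have hpair : ∀ j, 1 ≤ j → j ≤ m → m + 1 ≤ j + k → j + k ≤ n →
      a (n - k + 1 - j) * a (n + 1 - j) = -(a j * a (j + k)) := by
    intro j h1 h2 h3 h4'
    set i := n + 1 - (j + k) with hi
    have hieq : n - k + 1 - j = i := by omega
    have hi1 : 1 ≤ i := by omega
    have him : i ≤ m := by omega
    have h5 : n + 1 - i = j + k := by omega
    have hsi := hsym i hi1 him
    rw [h5] at hsi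
    have hsj := hsym j h1 h2
    have h2i : ((-1 : ℤ) ^ i) * ((-1 : ℤ) ^ i) = 1 := by
      rw [← pow_add]; exact Even.neg_one_pow ⟨i, rfl⟩
    have hai : a i = (-1 : ℤ) ^ i * a (j + k) := by
      rw [hsi, ← mul_assoc, h2i, one_mul]
    have hodd : Odd (i + j) := ⟨2 * d - c, by omega⟩
    have hm1 : ((-1 : ℤ) ^ i) * ((-1 : ℤ) ^ j) = -1 := by
      rw [← pow_add]; exact Odd.neg_one_pow hodd
    calc a (n - k + 1 - j) * a (n + 1 - j)
        = ((-1 : ℤ) ^ i * a (j + k)) * ((-1 : ℤ) ^ j * a j) := by rw [hieq, hai, hsj]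
      _ = ((-1 : ℤ) ^ i * (-1 : ℤ) ^ j) * (a j * a (j + k)) := by ring
      _ = -(a j * a (j + k)) := by rw [hm1]; ring
  have hcopy : ∀ i, 1 ≤ i → i + k ≤ m →
      a (n - k + 1 - i) * a (n + 1 - i) = a i * a (i + k) := by
    intro i h1 h2
    have e1 : n - k + 1 - i = n + 1 - (i + k) := by omega
    have hsi := hsym i h1 (by omega)
    have hsik := hsym (i + k) (by omega) h2
    have hev : Even ((i + k) + i) := ⟨i + c, by omega⟩
    have hm1 : ((-1 : ℤ) ^ (i + k)) * ((-1 : ℤ) ^ i) = 1 := by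
      rw [← pow_add]; exact Even.neg_one_pow hev
    calc a (n - k + 1 - i) * a (n + 1 - i)
        = ((-1 : ℤ) ^ (i + k) * a (i + k)) * ((-1 : ℤ) ^ i * a i) := by rw [e1, hsik, hsi]
      _ = ((-1 : ℤ) ^ (i + k) * (-1 : ℤ) ^ i) * (a i * a (i + k)) := by ring
      _ = a i * a (i + k) := by rw [hm1]; ring
  have hzero : ∀ L R : ℕ, L + R = n - k → R ≤ m → m ≤ L + k →
      ∑ j ∈ Finset.Ioc L R, a j * a (j + k) = 0 := by
    intro L R hLR hRm hLk
    apply Finset.sum_involution (fun j _ => n - k + 1 - j)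
    · intro j hj
      simp only [Finset.mem_Ioc] at hj
      have e1 : n - k + 1 - j + k = n + 1 - j := by omega
      simp only [e1]
      rw [hpair j (by omega) (by omega) (by omega) (by omega)]
      ring
    · intro j hj _
      simp only [Finset.mem_Ioc] at hj
      omega
    · intro j hj
      simp only [Finset.mem_Ioc] at hj ⊢
      omega
    · intro j hj
      simp only [Finset.mem_Ioc] at hj
      omega
  have hIoc : ∀ t : ℕ, Finset.Icc 1 t = Finset.Ioc 0 t := by
    intro t; ext x; simp only [Finset.mem_Icc, Finset.mem_Ioc]; omega
  constructor
  · intro hkm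
    have split2 := Finset.sum_Ioc_consecutive (fun j => a j * a (j + k))
      (show m - k ≤ m by omega) (show m ≤ n - k by omega)
    have split1 := Finset.sum_Ioc_consecutive (fun j => a j * a (j + k))
      (show 0 ≤ m - k by omega) (show m - k ≤ n - k by omega)
    have hmid : ∑ j ∈ Finset.Ioc (m - k) m, a j * a (j + k) = 0 :=
      hzero (m - k) m (by omega) le_rfl (by omega)
    have hthird : ∑ j ∈ Finset.Ioc m (n - k), a j * a (j + k)
        = ∑ i ∈ Finset.Ioc 0 (m - k), a i * a (i + k) := by
      refine Finset.sum_bij' (fun j _ => n - k + 1 - j) (fun i _ => n - k + 1 - i)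
        ?_ ?_ ?_ ?_ ?_
      · intro j hj; simp only [Finset.mem_Ioc] at hj ⊢; omega
      · intro i hi; simp only [Finset.mem_Ioc] at hi ⊢; omega
      · intro j hj; simp only [Finset.mem_Ioc] at hj
        show n - k + 1 - (n - k + 1 - j) = j; omega
      · intro i hi; simp only [Finset.mem_Ioc] at hi
        show n - k + 1 - (n - k + 1 - i) = i; omega
      · intro j hj
        simp only [Finset.mem_Ioc] at hj
        show a j * a (j + k) = a (n - k + 1 - j) * a (n - k + 1 - j + k)
        have h := hcopy (n - k + 1 - j) (by omega) (by omega)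
        have e1 : n - k + 1 - (n - k + 1 - j) = j := by omega
        have e2 : n + 1 - (n - k + 1 - j) = j + k := by omega
        rw [e1, e2] at h
        exact h
    have hfirst : ∑ i ∈ Finset.Ioc 0 (m - k), a i * a (i + k)
        = aperiodicCorr b m k := by
      rw [aperiodicCorr, hIoc]
      refine Finset.sum_congr rfl ?_
      intro i hi
      simp only [Finset.mem_Ioc] at hi
      rw [hb i (by omega) (by omega), hb (i + k) (by omega) (by omega)]
    rw [aperiodicCorr, hIoc]
    rw [← split1, ← split2, hmid, hthird, hfirst]
    ring
  · intro hkm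
    rw [aperiodicCorr, hIoc]
    exact hzero 0 (n - k) (by omega) (by omega) (by omega)
end

section
/- Let a be a strong symmetric binary sequence of length n = 2m. If k is odd with 1 ≤ k < m, then C_{n−k}(a) = (−1)^{(k+1)/2} + 2 Σ_{j=1}^{(k−1)/2} (−1)^j a_j a_{k+1−j}. -/
lemma negpow_parity (i j : ℕ) (h : i % 2 = j % 2) : (-1 : ℤ) ^ i = (-1) ^ j := by
  conv_lhs => rw [← Nat.div_add_mod i 2]
  conv_rhs => rw [← Nat.div_add_mod j 2]
  rw [pow_add, pow_add, pow_mul, pow_mul, h]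
  norm_num

theorem stmt_16 (n m : ℕ) (hm : 1 ≤ m) (hnm : n = 2 * m) (a : ℕ → ℤ)
    (ha : ∀ j, 1 ≤ j → j ≤ n → a j = 1 ∨ a j = -1)
    -- `a` is strong symmetric:
    (h4 : 4 ∣ n)
    (hss : ∀ j, 1 ≤ j → j ≤ n / 2 → a j * a (n + 1 - j) = (-1 : ℤ) ^ j)
    (k : ℕ) (hk1 : 1 ≤ k) (hkm : k < m) (hko : Odd k) :
    aperiodicCorr a n (n - k) =
      (-1 : ℤ) ^ ((k + 1) / 2) +
      2 * ∑ j ∈ Finset.Icc 1 ((k - 1) / 2), (-1 : ℤ) ^ j * (a j * a (k + 1 - j)) := by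
  obtain ⟨t, ht⟩ := hko
  subst hnm ht
  have hkn : 2 * t + 1 ≤ 2 * m := by omega
  have hsub : 2 * m - (2 * m - (2 * t + 1)) = 2 * t + 1 := by omega
  have hg : ∀ j ∈ Finset.Icc 1 (2 * t + 1),
      a j * a (j + (2 * m - (2 * t + 1))) = (-1 : ℤ) ^ j * (a j * a (2 * t + 1 + 1 - j)) := by
    intro j hj
    simp only [Finset.mem_Icc] at hj
    set i := 2 * t + 1 + 1 - j with hi
    have hi1 : 1 ≤ i := by omega
    have hin : i ≤ 2 * m := by omega
    have hsi := hss i hi1 (by omega)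
    have heq : 2 * m + 1 - i = j + (2 * m - (2 * t + 1)) := by omega
    rw [heq] at hsi
    have hsq : a i * a i = 1 := by
      rcases ha i hi1 hin with h | h <;> rw [h] <;> norm_num
    have haD : a (j + (2 * m - (2 * t + 1))) = (-1 : ℤ) ^ i * a i := by
      calc a (j + (2 * m - (2 * t + 1)))
          = (a i * a i) * a (j + (2 * m - (2 * t + 1))) := by rw [hsq, one_mul]
        _ = a i * (a i * a (j + (2 * m - (2 * t + 1)))) := by ring
        _ = a i * (-1 : ℤ) ^ i := by rw [hsi]
        _ = (-1 : ℤ) ^ i * a i := by ring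
    have hpar : (-1 : ℤ) ^ i = (-1 : ℤ) ^ j := negpow_parity i j (by omega)
    rw [haD, hpar]; ring
  rw [aperiodicCorr, hsub, Finset.sum_congr rfl hg]
  -- split the sum
  have hsplit : Finset.Icc 1 (2 * t + 1) =
      Finset.Icc 1 t ∪ Finset.Icc (t + 1) (2 * t + 1) := by
    ext x; simp only [Finset.mem_Icc, Finset.mem_union]; omega
  have hdisj : Disjoint (Finset.Icc 1 t) (Finset.Icc (t + 1) (2 * t + 1)) := by
    rw [Finset.disjoint_left]; intro x hx hx'
    simp only [Finset.mem_Icc] at hx hx'; omega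
  rw [hsplit, Finset.sum_union hdisj]
  have hins : Finset.Icc (t + 1) (2 * t + 1) =
      insert (t + 1) (Finset.Icc (t + 2) (2 * t + 1)) := by
    ext x; simp only [Finset.mem_Icc, Finset.mem_insert]; omega
  rw [hins, Finset.sum_insert (by simp [Finset.mem_Icc])]
  -- middle term
  have hmid : (-1 : ℤ) ^ (t + 1) * (a (t + 1) * a (2 * t + 1 + 1 - (t + 1)))
      = (-1 : ℤ) ^ (t + 1) := by
    have h1 : 2 * t + 1 + 1 - (t + 1) = t + 1 := by omega
    have hsq : a (t + 1) * a (t + 1) = 1 := by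
      rcases ha (t + 1) (by omega) (by omega) with h | h <;> rw [h] <;> norm_num
    rw [h1, hsq, mul_one]
  rw [hmid]
  -- reindex the last sum
  have hre : ∑ j ∈ Finset.Icc (t + 2) (2 * t + 1),
        (-1 : ℤ) ^ j * (a j * a (2 * t + 1 + 1 - j))
      = ∑ j ∈ Finset.Icc 1 t, (-1 : ℤ) ^ j * (a j * a (2 * t + 1 + 1 - j)) := by
    apply Finset.sum_nbij' (i := fun j => 2 * t + 2 - j) (j := fun j => 2 * t + 2 - j)
    · intro x hx; simp only [Finset.mem_Icc] at hx ⊢; omega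
    · intro x hx; simp only [Finset.mem_Icc] at hx ⊢; omega
    · intro x hx; simp only [Finset.mem_Icc] at hx; omega
    · intro x hx; simp only [Finset.mem_Icc] at hx; omega
    · intro x hx
      simp only [Finset.mem_Icc] at hx
      have h1 : 2 * t + 1 + 1 - (2 * t + 2 - x) = x := by omega
      have h2 : 2 * t + 1 + 1 - x = 2 * t + 2 - x := by omega
      have hpar : (-1 : ℤ) ^ (2 * t + 2 - x) = (-1 : ℤ) ^ x :=
        negpow_parity _ _ (by omega)
      rw [h1, h2, hpar]; ring
  rw [hre]
  have h3 : (2 * t + 1 + 1) / 2 = t + 1 := by omega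
  have h4' : (2 * t + 1 - 1) / 2 = t := by omega
  rw [h3, h4']
  ring
end

section
/- Let a be a strong symmetric binary sequence of length n = 2m. If k is odd with 1 ≤ k < m, then C_k(a) = (−1)^{(k−1)/2} − 2 Σ_{j=1}^{(k−1)/2} (−1)^j a_{j+m−k} a_{m+1−j}. -/
private lemma negpow_eq (p q : ℕ) (h : Even (p + q)) : (-1 : ℤ) ^ p = (-1) ^ q := by
  have hx : (-1 : ℤ) ^ p * (-1) ^ q = 1 := by rw [← pow_add]; exact h.neg_one_pow
  have hy : (-1 : ℤ) ^ q * (-1) ^ q = 1 := by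
    rw [← pow_add]; exact Even.neg_one_pow ⟨q, rfl⟩
  linear_combination (-1 : ℤ) ^ q * hx - (-1 : ℤ) ^ p * hy

theorem stmt_17 (n m : ℕ) (hm : 1 ≤ m) (hnm : n = 2 * m) (a : ℕ → ℤ)
    (ha : ∀ j, 1 ≤ j → j ≤ n → a j = 1 ∨ a j = -1)
    -- `a` is strong symmetric:
    (h4 : 4 ∣ n)
    (hss : ∀ j, 1 ≤ j → j ≤ n / 2 → a j * a (n + 1 - j) = (-1 : ℤ) ^ j)
    (k : ℕ) (hk1 : 1 ≤ k) (hkm : k < m) (hko : Odd k) :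
    aperiodicCorr a n k =
      (-1 : ℤ) ^ ((k - 1) / 2) -
      2 * ∑ j ∈ Finset.Icc 1 ((k - 1) / 2),
        (-1 : ℤ) ^ j * (a (j + m - k) * a (m + 1 - j)) := by
  obtain ⟨K, hK⟩ := hko
  obtain ⟨M, hM⟩ : Even m := by rcases h4 with ⟨c, hc⟩; exact ⟨c, by omega⟩
  have hsq : ∀ j, 1 ≤ j → j ≤ n → a j * a j = 1 := by
    intro j h1 h2; rcases ha j h1 h2 with h | h <;> rw [h] <;> ring
  have hsym : ∀ j j', 1 ≤ j → j ≤ m → j + j' = n + 1 → a j' = (-1 : ℤ) ^ j * a j := by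
    intro j j' h1 h2 h3
    have h5 : n + 1 - j = j' := by omega
    have h6 := hss j h1 (by omega)
    rw [h5] at h6
    rcases ha j h1 (by omega) with h | h <;> rw [h] at h6 ⊢ <;> linarith
  -- abbreviations
  have hK2 : (k - 1) / 2 = K := by omega
  rw [hK2]
  have e1 : Finset.Icc 1 (n - k) = Finset.Ioc 0 (n - k) := by
    ext x; simp only [Finset.mem_Icc, Finset.mem_Ioc]; omega
  have split1 :
      (∑ j ∈ Finset.Ioc 0 (m - k), a j * a (j + k)) +
        ∑ j ∈ Finset.Ioc (m - k) (n - k), a j * a (j + k) =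
        ∑ j ∈ Finset.Ioc 0 (n - k), a j * a (j + k) :=
    Finset.sum_Ioc_consecutive _ (by omega) (by omega)
  have split2 :
      (∑ j ∈ Finset.Ioc (m - k) m, a j * a (j + k)) +
        ∑ j ∈ Finset.Ioc m (n - k), a j * a (j + k) =
        ∑ j ∈ Finset.Ioc (m - k) (n - k), a j * a (j + k) :=
    Finset.sum_Ioc_consecutive _ (by omega) (by omega)
  have split3 :
      (∑ j ∈ Finset.Ioc (m - k) (m - K - 1), a j * a (j + k)) +
        ∑ j ∈ Finset.Ioc (m - K - 1) m, a j * a (j + k) =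
        ∑ j ∈ Finset.Ioc (m - k) m, a j * a (j + k) :=
    Finset.sum_Ioc_consecutive _ (by omega) (by omega)
  have split4 :
      (∑ j ∈ Finset.Ioc (m - K - 1) (m - K), a j * a (j + k)) +
        ∑ j ∈ Finset.Ioc (m - K) m, a j * a (j + k) =
        ∑ j ∈ Finset.Ioc (m - K - 1) m, a j * a (j + k) :=
    Finset.sum_Ioc_consecutive _ (by omega) (by omega)
  have single : ∑ j ∈ Finset.Ioc (m - K - 1) (m - K), a j * a (j + k) =
      a (m - K) * a (m - K + k) := by
    have : Finset.Ioc (m - K - 1) (m - K) = {m - K} := by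
      ext x; simp only [Finset.mem_Ioc, Finset.mem_singleton]; omega
    rw [this, Finset.sum_singleton]
  -- value at the center
  have hmidval : a (m - K) * a (m - K + k) = (-1 : ℤ) ^ K := by
    have h1 : a (m - K + k) = (-1 : ℤ) ^ (m - K) * a (m - K) :=
      hsym (m - K) (m - K + k) (by omega) (by omega) (by omega)
    rw [h1, negpow_eq (m - K) K ⟨M, by omega⟩]
    have h2 := hsq (m - K) (by omega) (by omega)
    linear_combination ((-1 : ℤ) ^ K) * h2
  -- cancellation of the outer parts
  have hcancel :
      (∑ j ∈ Finset.Ioc m (n - k), a j * a (j + k)) =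
        ∑ j ∈ Finset.Ioc 0 (m - k), -(a j * a (j + k)) := by
    refine Finset.sum_nbij' (fun p => n - k + 1 - p) (fun q => n - k + 1 - q) ?_ ?_ ?_ ?_ ?_
    · intro p hp; simp only [Finset.mem_Ioc] at hp ⊢; omega
    · intro q hq; simp only [Finset.mem_Ioc] at hq ⊢; omega
    · intro p hp; simp only [Finset.mem_Ioc] at hp; omega
    · intro q hq; simp only [Finset.mem_Ioc] at hq; omega
    · intro p hp
      simp only [Finset.mem_Ioc] at hp
      have h1 : a p = (-1 : ℤ) ^ (n - k + 1 - p + k) * a (n - k + 1 - p + k) :=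
        hsym (n - k + 1 - p + k) p (by omega) (by omega) (by omega)
      have h2 : a (p + k) = (-1 : ℤ) ^ (n - k + 1 - p) * a (n - k + 1 - p) :=
        hsym (n - k + 1 - p) (p + k) (by omega) (by omega) (by omega)
      have h3 : (-1 : ℤ) ^ (n - k + 1 - p + k) * (-1) ^ (n - k + 1 - p) = -1 := by
        rw [← pow_add]
        exact Odd.neg_one_pow ⟨(n - k + 1 - p) + K, by omega⟩
      rw [h1, h2]
      linear_combination a (n - k + 1 - p + k) * a (n - k + 1 - p) * h3
  -- pairing inside the middle part
  have hpair :
      (∑ j ∈ Finset.Ioc (m - k) (m - K - 1), a j * a (j + k)) =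
        ∑ j ∈ Finset.Ioc (m - K) m, a j * a (j + k) := by
    refine Finset.sum_nbij' (fun p => n - k + 1 - p) (fun q => n - k + 1 - q) ?_ ?_ ?_ ?_ ?_
    · intro p hp; simp only [Finset.mem_Ioc] at hp ⊢; omega
    · intro q hq; simp only [Finset.mem_Ioc] at hq ⊢; omega
    · intro p hp; simp only [Finset.mem_Ioc] at hp; omega
    · intro q hq; simp only [Finset.mem_Ioc] at hq; omega
    · intro j hj
      simp only [Finset.mem_Ioc] at hj
      have h1 : a (j + k) = (-1 : ℤ) ^ (n - k + 1 - j) * a (n - k + 1 - j) :=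
        hsym (n - k + 1 - j) (j + k) (by omega) (by omega) (by omega)
      have h2 : a (n - k + 1 - j + k) = (-1 : ℤ) ^ j * a j :=
        hsym j (n - k + 1 - j + k) (by omega) (by omega) (by omega)
      have h3 : (-1 : ℤ) ^ (n - k + 1 - j) = (-1) ^ j :=
        negpow_eq _ _ ⟨m - K, by omega⟩
      rw [h1, h2, h3]; ring
  -- the tail equals the target sum
  have htail :
      (∑ i ∈ Finset.Icc 1 K, -((-1 : ℤ) ^ i * (a (i + m - k) * a (m + 1 - i)))) =
        ∑ j ∈ Finset.Ioc (m - K) m, a j * a (j + k) := by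
    refine Finset.sum_nbij' (fun i => m + 1 - i) (fun j => m + 1 - j) ?_ ?_ ?_ ?_ ?_
    · intro i hi; simp only [Finset.mem_Icc] at hi; simp only [Finset.mem_Ioc]; omega
    · intro j hj; simp only [Finset.mem_Ioc] at hj; simp only [Finset.mem_Icc]; omega
    · intro i hi; simp only [Finset.mem_Icc] at hi; omega
    · intro j hj; simp only [Finset.mem_Ioc] at hj; omega
    · intro i hi
      simp only [Finset.mem_Icc] at hi
      have h1 : a (m + 1 - i + k) = (-1 : ℤ) ^ (i + m - k) * a (i + m - k) :=
        hsym (i + m - k) (m + 1 - i + k) (by omega) (by omega) (by omega)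
      have h2 : (-1 : ℤ) ^ (i + m - k) = -(-1) ^ i := by
        have hodd : (-1 : ℤ) ^ (m - k) = -1 := Odd.neg_one_pow ⟨M - K - 1, by omega⟩
        rw [show i + m - k = i + (m - k) from by omega, pow_add, hodd]; ring
      rw [h1, h2]; ring
  have hneg1 : (∑ j ∈ Finset.Ioc 0 (m - k), -(a j * a (j + k))) =
      -∑ j ∈ Finset.Ioc 0 (m - k), a j * a (j + k) := by rw [Finset.sum_neg_distrib]
  have hneg2 : (∑ i ∈ Finset.Icc 1 K, -((-1 : ℤ) ^ i * (a (i + m - k) * a (m + 1 - i)))) =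
      -∑ i ∈ Finset.Icc 1 K, (-1 : ℤ) ^ i * (a (i + m - k) * a (m + 1 - i)) := by
    rw [Finset.sum_neg_distrib]
  rw [aperiodicCorr, e1]
  rw [single, hmidval] at split4
  linarith [split1, split2, split3, split4, hcancel, hpair, htail, hneg1, hneg2]
end

section
/- Let a and p be strong symmetric binary sequences of length n = 2m such that p_j = a_{m+1−j} for each 1 ≤ j ≤ m. Then for each 1 ≤ k < n: C_k(p) = C_k(a) if k is even, and C_k(p) = −C_{n−k}(a) if k is odd. -/
private lemma neg_one_pow_congr_mod2 {s t : ℕ} (h : s % 2 = t % 2) :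
    ((-1 : ℤ)) ^ s = (-1 : ℤ) ^ t := by
  conv_lhs => rw [← Nat.mod_add_div s 2]
  conv_rhs => rw [← Nat.mod_add_div t 2]
  simp [pow_add, pow_mul, h]

theorem stmt_18 (n m : ℕ) (hm : 1 ≤ m) (hnm : n = 2 * m) (a p : ℕ → ℤ)
    (ha : ∀ j, 1 ≤ j → j ≤ n → a j = 1 ∨ a j = -1)
    (hp : ∀ j, 1 ≤ j → j ≤ n → p j = 1 ∨ p j = -1)
    -- `a` is strong symmetric:
    (h4a : 4 ∣ n)
    (hssa : ∀ j, 1 ≤ j → j ≤ n / 2 → a j * a (n + 1 - j) = (-1 : ℤ) ^ j)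
    -- `p` is strong symmetric:
    (h4p : 4 ∣ n)
    (hssp : ∀ j, 1 ≤ j → j ≤ n / 2 → p j * p (n + 1 - j) = (-1 : ℤ) ^ j)
    -- the first half of `p` is the reversed first half of `a`:
    (hpa : ∀ j, 1 ≤ j → j ≤ m → p j = a (m + 1 - j)) :
    ∀ k, 1 ≤ k → k < n →
      (Even k → aperiodicCorr p n k = aperiodicCorr a n k) ∧
      (Odd k → aperiodicCorr p n k = -aperiodicCorr a n (n - k)) := by
  have hm2 : m % 2 = 0 := by obtain ⟨c, hc⟩ := h4a; omega
  have hsqa : ∀ x, 1 ≤ x → x ≤ n → a x * a x = 1 := by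
    intro x h1 h2; rcases ha x h1 h2 with h | h <;> rw [h] <;> norm_num
  have hsqp : ∀ x, 1 ≤ x → x ≤ n → p x * p x = 1 := by
    intro x h1 h2; rcases hp x h1 h2 with h | h <;> rw [h] <;> norm_num
  -- generic upper-half reflection formula
  have hrefl : ∀ q : ℕ → ℤ, (∀ x, 1 ≤ x → x ≤ n → q x * q x = 1) →
      (∀ j, 1 ≤ j → j ≤ n / 2 → q j * q (n + 1 - j) = (-1 : ℤ) ^ j) →
      ∀ j, m + 1 ≤ j → j ≤ n → q j = (-1 : ℤ) ^ (j + 1) * q (n + 1 - j) := by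
    intro q hsq hss j h1 h2
    have e1 : 1 ≤ n + 1 - j := by omega
    have e2 : n + 1 - j ≤ n / 2 := by omega
    have h := hss (n + 1 - j) e1 e2
    rw [show n + 1 - (n + 1 - j) = j by omega] at h
    have h3 : q (n + 1 - j) * (q (n + 1 - j) * q j) = q (n + 1 - j) * (-1) ^ (n + 1 - j) := by
      rw [h]
    rw [← mul_assoc, hsq (n + 1 - j) e1 (by omega), one_mul] at h3
    rw [h3, neg_one_pow_congr_mod2 (show (n + 1 - j) % 2 = (j + 1) % 2 by omega)]
    ring
  have haR : ∀ j, m + 1 ≤ j → j ≤ n → a j = (-1 : ℤ) ^ (j + 1) * a (n + 1 - j) :=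
    hrefl a hsqa hssa
  have hpR0 : ∀ j, m + 1 ≤ j → j ≤ n → p j = (-1 : ℤ) ^ (j + 1) * p (n + 1 - j) :=
    hrefl p hsqp hssp
  have hpR : ∀ j, m + 1 ≤ j → j ≤ n → p j = (-1 : ℤ) ^ (j + 1) * a (j - m) := by
    intro j h1 h2
    rw [hpR0 j h1 h2, hpa (n + 1 - j) (by omega) (by omega),
      show m + 1 - (n + 1 - j) = j - m by omega]
  -- interval conversion
  have hIcc : ∀ x : ℕ, Finset.Icc 1 x = Finset.Ioc 0 x := by
    intro x; ext y; simp only [Finset.mem_Icc, Finset.mem_Ioc]; omega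
  -- splitting a sum over Ioc 0 (n-l) into three regions
  have hsplit : ∀ (F : ℕ → ℤ) (l : ℕ), l ≤ n →
      ∑ j ∈ Finset.Ioc 0 (n - l), F j =
        (∑ j ∈ Finset.Ioc 0 (m - l), F j)
          + (∑ j ∈ Finset.Ioc (m - l) (min m (n - l)), F j)
          + (∑ j ∈ Finset.Ioc (min m (n - l)) (n - l), F j) := by
    intro F l hl
    rw [Finset.sum_Ioc_consecutive F (show 0 ≤ m - l by omega)
        (show m - l ≤ min m (n - l) by omega),
      Finset.sum_Ioc_consecutive F (show 0 ≤ min m (n - l) by omega)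
        (show min m (n - l) ≤ n - l by omega)]
  -- third a-region equals (-1)^l times the first a-region
  have keyG : ∀ l, 1 ≤ l → l < n →
      (∑ i ∈ Finset.Ioc (min m (n - l)) (n - l), a i * a (i + l))
        = (-1 : ℤ) ^ l * ∑ i ∈ Finset.Ioc 0 (m - l), a i * a (i + l) := by
    intro l h1 h2
    rw [Finset.mul_sum]
    refine Finset.sum_nbij' (fun x => n + 1 - l - x) (fun x => n + 1 - l - x) ?_ ?_ ?_ ?_ ?_
    · intro x hx; simp only [Finset.mem_Ioc] at hx ⊢; omega
    · intro x hx; simp only [Finset.mem_Ioc] at hx ⊢; omega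
    · intro x hx; simp only [Finset.mem_Ioc] at hx
      show n + 1 - l - (n + 1 - l - x) = x; omega
    · intro x hx; simp only [Finset.mem_Ioc] at hx
      show n + 1 - l - (n + 1 - l - x) = x; omega
    · intro x hx
      simp only [Finset.mem_Ioc] at hx
      rw [haR x (by omega) (by omega), haR (x + l) (by omega) (by omega),
        show n + 1 - x = (n + 1 - l - x) + l by omega,
        show n + 1 - (x + l) = n + 1 - l - x by omega,
        mul_mul_mul_comm, ← pow_add,
        neg_one_pow_congr_mod2 (show (x + 1 + (x + l + 1)) % 2 = l % 2 by omega)]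
      ring
  intro k hk1 hk2
  -- first p-region equals first a-region
  have keyP1 : (∑ j ∈ Finset.Ioc 0 (m - k), p j * p (j + k))
      = ∑ j ∈ Finset.Ioc 0 (m - k), a j * a (j + k) := by
    refine Finset.sum_nbij' (fun x => m + 1 - k - x) (fun x => m + 1 - k - x) ?_ ?_ ?_ ?_ ?_
    · intro x hx; simp only [Finset.mem_Ioc] at hx ⊢; omega
    · intro x hx; simp only [Finset.mem_Ioc] at hx ⊢; omega
    · intro x hx; simp only [Finset.mem_Ioc] at hx
      show m + 1 - k - (m + 1 - k - x) = x; omega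
    · intro x hx; simp only [Finset.mem_Ioc] at hx
      show m + 1 - k - (m + 1 - k - x) = x; omega
    · intro x hx
      simp only [Finset.mem_Ioc] at hx
      rw [hpa x (by omega) (by omega), hpa (x + k) (by omega) (by omega),
        show m + 1 - x = (m + 1 - k - x) + k by omega,
        show m + 1 - (x + k) = m + 1 - k - x by omega]
      ring
  -- third p-region equals (-1)^k times the first a-region
  have keyP3 : (∑ j ∈ Finset.Ioc (min m (n - k)) (n - k), p j * p (j + k))
      = (-1 : ℤ) ^ k * ∑ j ∈ Finset.Ioc 0 (m - k), a j * a (j + k) := by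
    rw [Finset.mul_sum]
    refine Finset.sum_nbij' (fun x => x - m) (fun x => x + m) ?_ ?_ ?_ ?_ ?_
    · intro x hx; simp only [Finset.mem_Ioc] at hx ⊢; omega
    · intro x hx; simp only [Finset.mem_Ioc] at hx ⊢; omega
    · intro x hx; simp only [Finset.mem_Ioc] at hx
      show x - m + m = x; omega
    · intro x hx; simp only [Finset.mem_Ioc] at hx
      show x + m - m = x; omega
    · intro x hx
      simp only [Finset.mem_Ioc] at hx
      rw [hpR x (by omega) (by omega), hpR (x + k) (by omega) (by omega),
        show x + k - m = x - m + k by omega,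
        mul_mul_mul_comm, ← pow_add,
        neg_one_pow_congr_mod2 (show (x + 1 + (x + k + 1)) % 2 = k % 2 by omega)]
  -- straddle formulas
  have hstradP : ∀ j, m - k < j → j ≤ min m (n - k) →
      p j * p (j + k) = (-1 : ℤ) ^ (j + k + 1) * (a (m + 1 - j) * a (j + k - m)) := by
    intro j h1 h2
    rw [hpa j (by omega) (by omega), hpR (j + k) (by omega) (by omega)]
    ring
  have hstradA : ∀ j, m - k < j → j ≤ min m (n - k) →
      a j * a (j + k) = (-1 : ℤ) ^ (j + k + 1) * (a j * a (n + 1 - k - j)) := by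
    intro j h1 h2
    rw [haR (j + k) (by omega) (by omega), show n + 1 - (j + k) = n + 1 - k - j by omega]
    ring
  constructor
  · -- even case
    intro he
    have hke : k % 2 = 0 := Nat.even_iff.mp he
    have hP2 : (∑ j ∈ Finset.Ioc (m - k) (min m (n - k)), p j * p (j + k)) = 0 := by
      refine Finset.sum_involution (fun j _ => n + 1 - k - j) ?_ ?_ ?_ ?_
      · intro j hj
        simp only [Finset.mem_Ioc] at hj
        rw [hstradP j hj.1 hj.2, hstradP (n + 1 - k - j) (by omega) (by omega),
          show m + 1 - (n + 1 - k - j) = j + k - m by omega,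
          show n + 1 - k - j + k - m = m + 1 - j by omega,
          neg_one_pow_congr_mod2 (show (n + 1 - k - j + k + 1) % 2 = (j + k + 1 + 1) % 2 by omega),
          pow_succ]
        ring
      · intro j hj _; simp only [Finset.mem_Ioc] at hj
        show n + 1 - k - j ≠ j; omega
      · intro j hj; simp only [Finset.mem_Ioc] at hj ⊢; omega
      · intro j hj; simp only [Finset.mem_Ioc] at hj
        show n + 1 - k - (n + 1 - k - j) = j; omega
    have hA2 : (∑ j ∈ Finset.Ioc (m - k) (min m (n - k)), a j * a (j + k)) = 0 := by
      refine Finset.sum_involution (fun j _ => n + 1 - k - j) ?_ ?_ ?_ ?_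
      · intro j hj
        simp only [Finset.mem_Ioc] at hj
        rw [hstradA j hj.1 hj.2, hstradA (n + 1 - k - j) (by omega) (by omega),
          show n + 1 - k - (n + 1 - k - j) = j by omega,
          neg_one_pow_congr_mod2 (show (n + 1 - k - j + k + 1) % 2 = (j + k + 1 + 1) % 2 by omega),
          pow_succ]
        ring
      · intro j hj _; simp only [Finset.mem_Ioc] at hj
        show n + 1 - k - j ≠ j; omega
      · intro j hj; simp only [Finset.mem_Ioc] at hj ⊢; omega
      · intro j hj; simp only [Finset.mem_Ioc] at hj
        show n + 1 - k - (n + 1 - k - j) = j; omega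
    unfold aperiodicCorr
    simp only [hIcc]
    rw [hsplit (fun j => p j * p (j + k)) k (by omega),
      hsplit (fun j => a j * a (j + k)) k (by omega), hP2, hA2, keyP1, keyP3,
      keyG k hk1 hk2]
  · -- odd case
    intro ho
    have hko : k % 2 = 1 := Nat.odd_iff.mp ho
    have keyOdd : (∑ j ∈ Finset.Ioc (m - k) (min m (n - k)), p j * p (j + k))
        = -∑ j ∈ Finset.Ioc (m - (n - k)) (min m (n - (n - k))), a j * a (j + (n - k)) := by
      rw [← Finset.sum_neg_distrib]
      refine Finset.sum_nbij' (fun x => x + k - m) (fun x => x + m - k) ?_ ?_ ?_ ?_ ?_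
      · intro x hx; simp only [Finset.mem_Ioc] at hx ⊢; omega
      · intro x hx; simp only [Finset.mem_Ioc] at hx ⊢; omega
      · intro x hx; simp only [Finset.mem_Ioc] at hx
        show x + k - m + m - k = x; omega
      · intro x hx; simp only [Finset.mem_Ioc] at hx
        show x + m - k + k - m = x; omega
      · intro x hx
        simp only [Finset.mem_Ioc] at hx
        rw [hstradP x hx.1 hx.2, show x + k - m + (n - k) = x + m by omega,
          haR (x + m) (by omega) (by omega),
          show n + 1 - (x + m) = m + 1 - x by omega,
          neg_one_pow_congr_mod2 (show (x + m + 1) % 2 = (x + k + 1 + 1) % 2 by omega),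
          pow_succ]
        ring
    unfold aperiodicCorr
    simp only [hIcc]
    rw [hsplit (fun j => p j * p (j + k)) k (by omega),
      hsplit (fun j => a j * a (j + (n - k))) (n - k) (by omega),
      keyP1, keyP3, keyG (n - k) (by omega) (by omega), keyOdd,
      Odd.neg_one_pow ho, Odd.neg_one_pow (show Odd (n - k) from Nat.odd_iff.mpr (by omega))]
    ring
end
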